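/- arXiv:1205.4356 — 4 statements merged into one kernel-verified Lean document; each statement's English description precedes it below -/
import Mathlib

section
/- Let G be a graph with all degrees at most d and let c : E(G) → [k] be an edge coloring. Then there exists an edge coloring c₁ : E(G) → [30d³k] such that c₁(e) ≡ c(e) modulo k for every edge e, and whenever c₁(e₁) = c₁(e₂) for distinct edges e₁, e₂, the distance between e₁ and e₂ in the line graph of G is at least 3. -/
noncomputable section

/-- Card bound for a bounded union of small sets. -/
lemma my_ncard_biUnion_le {α β : Type*} [Finite β] {s : Set α} (hs : s.Finite)
    (t : α → Set β) (m : ℕ) (ht : ∀ x, (t x).ncard ≤ m) :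
    (⋃ x ∈ s, t x).ncard ≤ s.ncard * m := by
  refine Set.Finite.induction_on (motive := fun s _ => (⋃ x ∈ s, t x).ncard ≤ s.ncard * m) s hs
    (by simp) ?_
  intro a s' has hs' ih
  · rw [Set.biUnion_insert, Set.ncard_insert_of_notMem has hs']
    calc (t a ∪ ⋃ x ∈ s', t x).ncard ≤ (t a).ncard + (⋃ x ∈ s', t x).ncard :=
          Set.ncard_union_le _ _
      _ ≤ m + s'.ncard * m := Nat.add_le_add (ht a) ih
      _ = (s'.ncard + 1) * m := by ring

/-- Greedy list coloring: if each vertex conflicts with fewer than `n` others and each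
list has at least `n` colors, there is a proper list coloring. -/
lemma my_greedy {α : Type*} [Finite α] (R : α → α → Prop)
    (hsym : ∀ a b, R a b → R b a) (hirr : ∀ a, ¬ R a a) (n : ℕ)
    (hdeg : ∀ a, {b | R a b}.ncard < n) (L : α → Finset ℕ) (hL : ∀ a, n ≤ (L a).card) :
    ∃ f : α → ℕ, (∀ a, f a ∈ L a) ∧ ∀ a b, R a b → f a ≠ f b := by
  classical
  have hne : ∀ a, (L a).Nonempty := fun a =>
    Finset.card_pos.mp (lt_of_le_of_lt (Nat.zero_le _) (lt_of_lt_of_le (hdeg a) (hL a)))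
  have key : ∀ s : Finset α, ∃ f : α → ℕ, (∀ a, f a ∈ L a) ∧
      ∀ a ∈ s, ∀ b ∈ s, R a b → f a ≠ f b := by
    intro s
    induction s using Finset.induction_on with
    | empty =>
      exact ⟨fun a => (L a).min' (hne a), fun a => Finset.min'_mem _ _, by simp⟩
    | @insert a s ha ih =>
      obtain ⟨f, hf1, hf2⟩ := ih
      set forb := (s.filter (fun b => R a b)).image f with hforb_def
      have h1 : forb.card < n := by
        refine lt_of_le_of_lt (Finset.card_image_le.trans ?_) (hdeg a)
        rw [← Set.ncard_coe_finset]
        exact Set.ncard_le_ncard (by intro x hx; simpa using (Finset.mem_filter.mp (by simpa using hx)).2) (Set.toFinite _)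
      have h2 : ((L a) \ forb).Nonempty := by
        rw [← Finset.card_pos]
        have := Finset.le_card_sdiff forb (L a)
        have h3 := hL a
        omega
      obtain ⟨x, hx⟩ := h2
      rw [Finset.mem_sdiff] at hx
      refine ⟨Function.update f a x, ?_, ?_⟩
      · intro b
        rcases eq_or_ne b a with rfl | hb
        · simpa using hx.1
        · simpa [Function.update_of_ne hb] using hf1 b
      · intro p hp q hq hR
        rcases Finset.mem_insert.mp hp with hpa0 | hp' <;>
          rcases Finset.mem_insert.mp hq with hqa0 | hq'
        · rw [hpa0, hqa0] at hR
          exact absurd hR (hirr a)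
        · -- p = a, q ∈ s
          have hqa : q ≠ a := fun h => ha (h ▸ hq')
          rw [hpa0] at hR ⊢
          rw [Function.update_self, Function.update_of_ne hqa]
          intro hcon
          exact hx.2 (Finset.mem_image.mpr ⟨q, Finset.mem_filter.mpr ⟨hq', hR⟩, hcon.symm⟩)
        · -- q = a, p ∈ s
          rw [hqa0] at hR ⊢
          have hpa : p ≠ a := fun h => ha (h ▸ hp')
          rw [Function.update_self, Function.update_of_ne hpa]
          intro hcon
          exact hx.2 (Finset.mem_image.mpr ⟨p, Finset.mem_filter.mpr ⟨hp', hsym _ _ hR⟩, hcon⟩)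
        · have hpa : p ≠ a := fun h => ha (h ▸ hp')
          have hqa : q ≠ a := fun h => ha (h ▸ hq')
          rw [Function.update_of_ne hpa, Function.update_of_ne hqa]
          exact hf2 p hp' q hq' hR
  have : Fintype α := Fintype.ofFinite α
  obtain ⟨f, hf1, hf2⟩ := key Finset.univ
  exact ⟨f, hf1, fun a b hR => hf2 a (Finset.mem_univ a) b (Finset.mem_univ b) hR⟩

lemma my_adj_of_two_mem {V : Type*} {G : SimpleGraph V} {f : Sym2 V} (hf : f ∈ G.edgeSet)
    {u v : V} (hu : u ∈ f) (hv : v ∈ f) (huv : u ≠ v) : G.Adj u v := by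
  induction f using Sym2.ind with
  | _ x y =>
    rw [SimpleGraph.mem_edgeSet] at hf
    rcases Sym2.mem_iff.mp hu with rfl | rfl <;> rcases Sym2.mem_iff.mp hv with h | h
    · exact absurd h.symm huv
    · rw [h]; exact hf
    · rw [h]; exact hf.symm
    · exact absurd h.symm huv

/-- Let `G` be a graph with all degrees at most `d` and `c : E(G) → [k]`
an edge coloring.  Then there is an edge coloring `c₁ : E(G) → [30d³k]` with
`c₁(e) ≡ c(e) (mod k)` for every edge `e`, such that any two distinct edges with the same
`c₁`-color are at distance at least `3` in the line graph of `G`. -/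
theorem exists_spread_edge_coloring (d k : ℕ) (hd : 1 ≤ d) (hk : 1 ≤ k)
    {V : Type} [Fintype V] (G : SimpleGraph V)
    (hdeg : ∀ v, (G.neighborSet v).ncard ≤ d)
    (c : G.edgeSet → Fin k) :
    ∃ c₁ : G.edgeSet → Fin (30 * d ^ 3 * k),
      (∀ e, (c₁ e : ℕ) % k = (c e : ℕ)) ∧
      ∀ e₁ e₂ : G.edgeSet, e₁ ≠ e₂ → c₁ e₁ = c₁ e₂ →
        ∀ p : G.lineGraph.Walk e₁ e₂, 3 ≤ p.length := by
  classical
  set n := 30 * d ^ 3 with hn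
  set R : G.edgeSet → G.edgeSet → Prop := fun e e' => e ≠ e' ∧
    ∃ f : G.edgeSet, (∃ u, u ∈ (e : Sym2 V) ∧ u ∈ (f : Sym2 V)) ∧
      (∃ v, v ∈ (f : Sym2 V) ∧ v ∈ (e' : Sym2 V)) with hR
  have hsym : ∀ a b, R a b → R b a := by
    rintro a b ⟨hne, f, ⟨u, hu1, hu2⟩, ⟨v, hv1, hv2⟩⟩
    exact ⟨hne.symm, f, ⟨v, hv2, hv1⟩, ⟨u, hu2, hu1⟩⟩
  have hirr : ∀ a, ¬ R a a := fun a h => h.1 rfl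
  have hinc : ∀ v, (G.incidenceSet v).ncard ≤ d := by
    intro v
    have h1 : (G.incidenceSet v).ncard = (G.neighborSet v).ncard := by
      rw [← Nat.card_coe_set_eq, ← Nat.card_coe_set_eq]
      exact Nat.card_congr (G.incidenceSetEquivNeighborSet v)
    rw [h1]; exact hdeg v
  have hdeg' : ∀ e : G.edgeSet, {e' | R e e'}.ncard < n := by
    intro e
    obtain ⟨a, b, hab⟩ : ∃ a b, (e : Sym2 V) = s(a, b) :=
      Sym2.inductionOn (e : Sym2 V) (fun x y => ⟨x, y, rfl⟩)
    set T : Set V := (({a, b} : Set V) ∪ G.neighborSet a) ∪ G.neighborSet b with hT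
    have hTcard : T.ncard ≤ 2 + d + d := by
      calc T.ncard ≤ (({a, b} : Set V) ∪ G.neighborSet a).ncard + (G.neighborSet b).ncard :=
            Set.ncard_union_le _ _
        _ ≤ (({a, b} : Set V).ncard + (G.neighborSet a).ncard) + (G.neighborSet b).ncard :=
            Nat.add_le_add_right (Set.ncard_union_le _ _) _
        _ ≤ (2 + d) + d := by
            refine Nat.add_le_add (Nat.add_le_add ?_ (hdeg a)) (hdeg b)
            exact (Set.ncard_insert_le _ _).trans (by simp)
        _ = 2 + d + d := rfl
    have hsub : Subtype.val '' {e' | R e e'} ⊆ ⋃ v ∈ T, G.incidenceSet v := by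
      rintro E ⟨e', ⟨hne, f, ⟨u, hu1, hu2⟩, ⟨v, hv1, hv2⟩⟩, rfl⟩
      have hvT : v ∈ T := by
        have hu : u = a ∨ u = b := by rw [hab] at hu1; exact Sym2.mem_iff.mp hu1
        rcases eq_or_ne v u with rfl | hvu
        · rcases hu with rfl | rfl
          · exact Or.inl (Or.inl (Or.inl rfl))
          · exact Or.inl (Or.inl (Or.inr rfl))
        · have hadj : G.Adj u v := my_adj_of_two_mem f.2 hu2 hv1 hvu.symm
          rcases hu with rfl | rfl
          · exact Or.inl (Or.inr hadj)
          · exact Or.inr hadj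
      exact Set.mem_biUnion hvT ((G.edge_mem_incidenceSet_iff (e := e')).mpr hv2)
    have h2 : (⋃ v ∈ T, G.incidenceSet v).ncard ≤ T.ncard * d :=
      my_ncard_biUnion_le (Set.toFinite T) _ d hinc
    have h3 : {e' | R e e'}.ncard ≤ (2 + d + d) * d := by
      calc {e' | R e e'}.ncard = (Subtype.val '' {e' | R e e'}).ncard :=
            (Set.ncard_image_of_injective _ Subtype.val_injective).symm
        _ ≤ (⋃ v ∈ T, G.incidenceSet v).ncard := Set.ncard_le_ncard hsub (Set.toFinite _)
        _ ≤ T.ncard * d := h2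
        _ ≤ (2 + d + d) * d := Nat.mul_le_mul_right d hTcard
    have h4 : (2 + d + d) * d ≤ 4 * d * d := Nat.mul_le_mul_right _ (by omega)
    have h5 : 4 * d * d < 30 * d ^ 3 := by nlinarith
    omega
  set L : G.edgeSet → Finset ℕ := fun e => (Finset.range n).image (fun i => (c e : ℕ) + i * k)
    with hLdef
  have hL : ∀ e, n ≤ (L e).card := by
    intro e
    have hinj : Function.Injective (fun i => (c e : ℕ) + i * k) := by
      intro i j h
      simp only [] at h
      have h' : i * k = j * k := by omega
      exact Nat.eq_of_mul_eq_mul_right hk h'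
    rw [hLdef]
    simp only []
    rw [Finset.card_image_of_injective _ hinj, Finset.card_range]
  obtain ⟨f, hf1, hf2⟩ := my_greedy R hsym hirr n hdeg' L hL
  have hfb : ∀ e, f e < 30 * d ^ 3 * k := by
    intro e
    obtain ⟨i, hi, hie⟩ := Finset.mem_image.mp (hf1 e)
    rw [← hie]
    have hce : (c e : ℕ) < k := (c e).isLt
    have hik : (c e : ℕ) + i * k < (i + 1) * k := by rw [add_mul, one_mul]; omega
    have hin : i + 1 ≤ n := Finset.mem_range.mp hi
    calc (c e : ℕ) + i * k < (i + 1) * k := hik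
      _ ≤ n * k := Nat.mul_le_mul_right k hin
  refine ⟨fun e => ⟨f e, hfb e⟩, ?_, ?_⟩
  · intro e
    obtain ⟨i, hi, hie⟩ := Finset.mem_image.mp (hf1 e)
    show f e % k = (c e : ℕ)
    rw [← hie, Nat.add_mul_mod_self_right]
    exact Nat.mod_eq_of_lt (c e).isLt
  · intro e₁ e₂ hne heq p
    have hfe : f e₁ = f e₂ := congrArg Fin.val heq
    have hnR : ¬ R e₁ e₂ := fun h => hf2 _ _ h hfe
    by_contra hlen
    push_neg at hlen
    cases p with
    | nil => exact hne rfl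
    | cons h q =>
      cases q with
      | nil =>
        obtain ⟨hne', v, hv1, hv2⟩ := SimpleGraph.lineGraph_adj_iff_exists.mp h
        exact hnR ⟨hne, e₁, ⟨v, hv1, hv1⟩, ⟨v, hv1, hv2⟩⟩
      | cons h' q' =>
        cases q' with
        | nil =>
          obtain ⟨_, u, hu1, hu2⟩ := SimpleGraph.lineGraph_adj_iff_exists.mp h
          obtain ⟨_, v, hv1, hv2⟩ := SimpleGraph.lineGraph_adj_iff_exists.mp h'
          exact hnR ⟨hne, _, ⟨u, hu1, hu2⟩, ⟨v, hv1, hv2⟩⟩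
        | cons h'' q'' =>
            simp only [SimpleGraph.Walk.length_cons] at hlen
            omega
end
end

section
/- (Regularization Lemma) For all positive integers r, k and every real ε > 0 there exists an integer t = t_{r,k,ε} such that for every graph G with all degrees at most d there is a vertex coloring q : V(G) → [t] satisfying: (i) if q(v) = q(w) then either v = w or the distance of v and w in G is at least r+1; and (ii) for every k-coloring g of V(G) there exists a map α : [t] → [k] such that d_var(P_{G,r}[g], P_{G,r}[α ∘ q]) ≤ ε. -/
open MeasureTheory Filter
open scoped ENNReal

noncomputable section

/-! ### Colored rooted graphs and their isomorphism classes -/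

/-- A finite rooted graph whose vertices are colored by elements of `C`. -/
structure PreBall (C : Type) : Type 1 where
  V : Type
  fintypeV : Fintype V
  graph : SimpleGraph V
  root : V
  col : V → C

attribute [instance] PreBall.fintypeV

/-- Isomorphism of colored rooted graphs: a graph isomorphism preserving root and colors. -/
def PreBall.IsIso {C : Type} (B₁ B₂ : PreBall C) : Prop :=
  ∃ e : B₁.graph ≃g B₂.graph, e B₁.root = B₂.root ∧ ∀ v, B₂.col (e v) = B₁.col v

instance ballSetoid (C : Type) : Setoid (PreBall C) where
  r := PreBall.IsIso
  iseqv := by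
    refine ⟨fun B => ⟨(SimpleGraph.Iso.refl : B.graph ≃g B.graph), ?_, fun v => ?_⟩, ?_, ?_⟩
    · rfl
    · rfl
    · rintro B₁ B₂ ⟨e, hr, hc⟩
      refine ⟨e.symm, ?_, fun v => ?_⟩
      · rw [← hr]; exact e.symm_apply_apply _
      · rw [← hc (e.symm v)]
        congr 1
        exact e.apply_symm_apply v
    · rintro B₁ B₂ B₃ ⟨e, hr, hc⟩ ⟨f, hr', hc'⟩
      refine ⟨e.trans f, ?_, fun v => ?_⟩
      · show f (e B₁.root) = B₃.root
        rw [hr, hr']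
      · show B₃.col (f (e v)) = B₁.col v
        rw [hc' (e v), hc v]

/-- The set of isomorphism classes of `C`-colored rooted graphs.  For `C = Fin k`,
the classes of radius at most `r` and degree at most `d` form the finite set `U^{r,k}`. -/
def Ball (C : Type) : Type 1 := Quotient (ballSetoid C)

/-! ### Balls in graphs -/

/-- The set of vertices at distance at most `r` from `x` (the vertex set of `N_{G,r}(x)`). -/
def SimpleGraph.ballSet {V : Type} (G : SimpleGraph V) (x : V) (r : ℕ) : Set V :=
  {y | G.Reachable x y ∧ G.dist x y ≤ r}

theorem SimpleGraph.ballSet_finite {V : Type} (G : SimpleGraph V)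
    (hfin : ∀ v, (G.neighborSet v).Finite) (x : V) : ∀ r : ℕ, (G.ballSet x r).Finite := by
  intro r
  induction r with
  | zero =>
    refine Set.Finite.subset (Set.finite_singleton x) ?_
    rintro y ⟨hre, hd⟩
    obtain ⟨p, hp⟩ := hre.exists_walk_length_eq_dist
    rw [Nat.le_zero.mp hd] at hp
    exact Set.mem_singleton_iff.mpr (SimpleGraph.Walk.eq_of_length_eq_zero hp).symm
  | succ r ih =>
    refine Set.Finite.subset (ih.union (Set.Finite.biUnion ih fun u _ => hfin u)) ?_
    rintro y ⟨hre, hd⟩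
    obtain ⟨p, hp⟩ := hre.exists_walk_length_eq_dist
    have hplen : p.reverse.length ≤ r + 1 := by
      rw [SimpleGraph.Walk.length_reverse, hp]; exact hd
    rcases hq : p.reverse with _ | ⟨hadj, q⟩
    · refine Or.inl ⟨hre, ?_⟩
      have : p.reverse.length = 0 := by rw [hq]; rfl
      rw [SimpleGraph.Walk.length_reverse] at this
      rw [← hp, this]
      exact Nat.zero_le r
    · rename_i u
      rw [hq] at hplen
      have hqlen : q.length ≤ r := by
        have : q.length + 1 ≤ r + 1 := hplen
        omega
      refine Or.inr (Set.mem_biUnion (?_ : u ∈ G.ballSet x r) ?_)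
      · refine ⟨⟨q.reverse⟩, le_trans (SimpleGraph.dist_le q.reverse) ?_⟩
        rw [SimpleGraph.Walk.length_reverse]
        exact hqlen
      · exact hadj.symm

/-- The colored rooted ball `N_{G,r}(x)` as an isomorphism class, where the coloring `g`
is given on the vertices of the ball. -/
def ballAtSub {V C : Type} (G : SimpleGraph V) (r : ℕ) (x : V)
    (hfin : (G.ballSet x r).Finite) (g : ↥(G.ballSet x r) → C) : Ball C :=
  Quotient.mk (ballSetoid C)
    { V := ↥(G.ballSet x r)
      fintypeV := hfin.fintype
      graph := G.induce (G.ballSet x r)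
      root := ⟨x, SimpleGraph.Reachable.refl x, by rw [SimpleGraph.dist_self]; exact Nat.zero_le r⟩
      col := g }

/-- The `c`-colored rooted ball of radius `r` around `x` in `G`, as a point of `Ball C`. -/
def ballAt {V C : Type} (G : SimpleGraph V) (c : V → C) (r : ℕ) (x : V)
    (hfin : (G.ballSet x r).Finite) : Ball C :=
  ballAtSub G r x hfin fun v => c v.1

/-- Colored ball of radius `r` around `x` in a finite graph. -/
def finBallAt {V C : Type} [Fintype V] (G : SimpleGraph V) (c : V → C) (r : ℕ) (x : V) :
    Ball C :=
  ballAt G c r x (Set.toFinite _)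

/-- `P_{G,r}[c]` : the distribution of the `c`-colored `r`-ball around a uniformly
random vertex of the finite graph `G`. -/
def finProb {V C : Type} [Fintype V] (G : SimpleGraph V) (c : V → C) (r : ℕ) :
    Ball C → ℝ :=
  fun β => ({x : V | finBallAt G c r x = β}.ncard : ℝ) / (Fintype.card V : ℝ)

/-- The total mass that a (finitely supported) distribution on colored balls puts
on a set `A`. -/
def ballMass {C : Type} (p : Ball C → ℝ) (A : Set (Ball C)) : ℝ :=
  ∑' b : A, p b

/-- Total variation distance between two distributions on colored balls:
`d_var(p,q) = sup_A |p(A) - q(A)|`. -/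
def dvar {C : Type} (p q : Ball C → ℝ) : ℝ :=
  ⨆ A : Set (Ball C), |ballMass p A - ballMass q A|

/-- Hausdorff distance between two sets of distributions, with respect to `dvar`. -/
def hausd {C : Type} (Q₁ Q₂ : Set (Ball C → ℝ)) : ℝ :=
  max (⨆ p ∈ Q₁, ⨅ q ∈ Q₂, dvar p q) (⨆ p ∈ Q₂, ⨅ q ∈ Q₁, dvar p q)

/-- Closure of a set of distributions on colored balls in the total variation distance. -/
def tvClosure {C : Type} (Q : Set (Ball C → ℝ)) : Set (Ball C → ℝ) :=
  {p | ∀ ε : ℝ, 0 < ε → ∃ q ∈ Q, dvar p q ≤ ε}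

/-- `Q_{G,r,k}`: the set of local statistics of all `k`-colorings of the finite graph `G`. -/
def finQ {V : Type} [Fintype V] (G : SimpleGraph V) (r k : ℕ) : Set (Ball (Fin k) → ℝ) :=
  {p | ∃ c : V → Fin k, p = finProb G c r}

/-- A finite graph with all degrees at most `d`. -/
structure FinGraph (d : ℕ) where
  n : ℕ
  graph : SimpleGraph (Fin n)
  deg_le : ∀ v, (graph.neighborSet v).ncard ≤ d

/-- The quotient set `Q_{G,r,k}` of a finite bounded-degree graph. -/
def FinGraph.Q {d : ℕ} (G : FinGraph d) (r k : ℕ) : Set (Ball (Fin k) → ℝ) :=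
  finQ G.graph r k

/-- A sequence of sets of distributions converges in the Hausdorff distance. -/
def HausdTendsto {C : Type} (Q : ℕ → Set (Ball C → ℝ)) (L : Set (Ball C → ℝ)) : Prop :=
  Filter.Tendsto (fun n => hausd (Q n) L) Filter.atTop (nhds 0)

/-- Local-global convergence of a sequence of finite graphs of degree at most `d`:
for all `r, k ≥ 1` the quotient sets `Q_{G_n,r,k}` converge in the Hausdorff distance
(inside the compact space of probability distributions on `U^{r,k}` with the total
variation distance). -/
def LocGlobConv {d : ℕ} (G : ℕ → FinGraph d) : Prop :=
  ∀ r k : ℕ, 1 ≤ r → 1 ≤ k → ∃ L : Set (Ball (Fin k) → ℝ), HausdTendsto (fun n => (G n).Q r k) L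


/-- The ball of radius `r` has at most `(d+1)^r` vertices when degrees are at most `d`. -/
theorem ballSet_ncard_le {V : Type} [Fintype V] (G : SimpleGraph V) (d : ℕ)
    (hdeg : ∀ v, (G.neighborSet v).ncard ≤ d) (x : V) :
    ∀ r : ℕ, (G.ballSet x r).ncard ≤ (d + 1) ^ r := by
  classical
  intro r
  induction r with
  | zero =>
    have hsub : G.ballSet x 0 ⊆ {x} := by
      rintro y ⟨hre, hd0⟩
      obtain ⟨p, hp⟩ := hre.exists_walk_length_eq_dist
      rw [Nat.le_zero.mp hd0] at hp
      exact Set.mem_singleton_iff.mpr (SimpleGraph.Walk.eq_of_length_eq_zero hp).symm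
    calc (G.ballSet x 0).ncard ≤ ({x} : Set V).ncard := Set.ncard_le_ncard hsub (Set.toFinite _)
      _ = 1 := Set.ncard_singleton x
      _ ≤ (d+1)^0 := by norm_num
  | succ r ih =>
    have hsub : G.ballSet x (r+1) ⊆ G.ballSet x r ∪ ⋃ u ∈ G.ballSet x r, G.neighborSet u := by
      rintro y ⟨hre, hd1⟩
      obtain ⟨p, hp⟩ := hre.exists_walk_length_eq_dist
      have hplen : p.reverse.length ≤ r + 1 := by
        rw [SimpleGraph.Walk.length_reverse, hp]; exact hd1
      rcases hq : p.reverse with _ | ⟨hadj, q⟩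
      · refine Or.inl ⟨hre, ?_⟩
        have : p.reverse.length = 0 := by rw [hq]; rfl
        rw [SimpleGraph.Walk.length_reverse] at this
        rw [← hp, this]
        exact Nat.zero_le r
      · rename_i u
        rw [hq] at hplen
        have hqlen : q.length ≤ r := by
          have : q.length + 1 ≤ r + 1 := hplen
          omega
        refine Or.inr (Set.mem_biUnion (?_ : u ∈ G.ballSet x r) ?_)
        · refine ⟨⟨q.reverse⟩, le_trans (SimpleGraph.dist_le q.reverse) ?_⟩
          rw [SimpleGraph.Walk.length_reverse]
          exact hqlen
        · exact hadj.symm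
    have hUnion : (⋃ u ∈ G.ballSet x r, G.neighborSet u).ncard ≤ (d+1)^r * d := by
      set Bf := (Set.toFinite (G.ballSet x r)).toFinset with hBf
      set F := Bf.biUnion (fun u => (Set.toFinite (G.neighborSet u)).toFinset) with hF
      have heq : (⋃ u ∈ G.ballSet x r, G.neighborSet u) = ↑F := by
        ext y
        simp [hF, Set.Finite.mem_toFinset, hBf, SimpleGraph.ballSet, Set.mem_setOf_eq]
      rw [heq, Set.ncard_coe_finset]
      calc F.card ≤ Bf.card * d := by
            apply Finset.card_biUnion_le_card_mul
            intro u _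
            rw [← Set.ncard_eq_toFinset_card]
            exact hdeg u
        _ ≤ (d+1)^r * d := by
            have : Bf.card = (G.ballSet x r).ncard := (Set.ncard_eq_toFinset_card _ _).symm
            rw [this]
            exact Nat.mul_le_mul_right d ih
    calc (G.ballSet x (r+1)).ncard
        ≤ (G.ballSet x r ∪ ⋃ u ∈ G.ballSet x r, G.neighborSet u).ncard :=
          Set.ncard_le_ncard hsub (Set.toFinite _)
      _ ≤ (G.ballSet x r).ncard + (⋃ u ∈ G.ballSet x r, G.neighborSet u).ncard :=
          Set.ncard_union_le _ _
      _ ≤ (d+1)^r + (d+1)^r * d := Nat.add_le_add ih hUnion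
      _ = (d+1)^(r+1) := by ring

/-- Representations of colored rooted graphs with at most `B` vertices. -/
def BallRep (C : Type) (B : ℕ) : Type :=
  Σ n : Fin (B + 1), SimpleGraph (Fin n.val) × Fin n.val × (Fin n.val → C)

instance ballRepFinite (C : Type) [Finite C] (B : ℕ) : Finite (BallRep C B) := by
  unfold BallRep
  infer_instance

def ballRepToBall {C : Type} {B : ℕ} (R : BallRep C B) : Ball C :=
  Quotient.mk (ballSetoid C)
    { V := Fin R.1.val
      fintypeV := inferInstance
      graph := R.2.1
      root := R.2.2.1
      col := R.2.2.2 }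

/-- The set of isomorphism classes of colored rooted graphs on at most `B` vertices. -/
def smallBalls (C : Type) (B : ℕ) : Set (Ball C) :=
  Set.range (ballRepToBall (C := C) (B := B))

theorem smallBalls_finite (C : Type) [Finite C] (B : ℕ) : (smallBalls C B).Finite :=
  Set.finite_range _

theorem mem_smallBalls {C : Type} {B : ℕ} (P : PreBall C) (h : Nat.card P.V ≤ B) :
    Quotient.mk (ballSetoid C) P ∈ smallBalls C B := by
  classical
  have hcard : Nat.card P.V = Fintype.card P.V := Nat.card_eq_fintype_card
  let e : P.V ≃ Fin (Nat.card P.V) :=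
    (Fintype.equivFin P.V).trans (finCongr hcard.symm)
  refine ⟨⟨⟨Nat.card P.V, by omega⟩, P.graph.comap e.symm, e P.root, P.col ∘ e.symm⟩, ?_⟩
  refine Quotient.sound ⟨⟨e.symm, fun {a b} => Iff.rfl⟩, ?_, fun v => ?_⟩
  · exact e.symm_apply_apply _
  · rfl

theorem finBallAt_mem_smallBalls {V C : Type} [Fintype V] (G : SimpleGraph V) (c : V → C)
    (r : ℕ) (x : V) (d : ℕ) (hdeg : ∀ v, (G.neighborSet v).ncard ≤ d) :
    finBallAt G c r x ∈ smallBalls C ((d + 1) ^ r) := by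
  apply mem_smallBalls
  rw [Nat.card_coe_set_eq]
  exact ballSet_ncard_le G d hdeg x r

theorem finProb_eq_zero_of_not_mem {V : Type} {C : Type} [Fintype V] (G : SimpleGraph V)
    (c : V → C) (r d : ℕ) (hdeg : ∀ v, (G.neighborSet v).ncard ≤ d) (β : Ball C)
    (hβ : β ∉ smallBalls C ((d + 1) ^ r)) : finProb G c r β = 0 := by
  have hempty : {x : V | finBallAt G c r x = β} = ∅ := by
    ext x
    simp only [Set.mem_setOf_eq, Set.mem_empty_iff_false, iff_false]
    intro hx
    exact hβ (hx ▸ finBallAt_mem_smallBalls G c r x d hdeg)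
  rw [finProb, hempty]
  simp

theorem summable_of_support_subset {C : Type} {f : Ball C → ℝ} {S : Set (Ball C)}
    (hS : S.Finite) (hf : ∀ b ∉ S, f b = 0) (A : Set (Ball C)) :
    Summable (fun b : A => f b) := by
  classical
  have hfin : {b : A | (b : Ball C) ∈ S}.Finite :=
    Set.Finite.preimage (Set.injOn_of_injective Subtype.coe_injective) hS
  apply summable_of_ne_finset_zero (s := hfin.toFinset)
  intro b hb
  rw [Set.Finite.mem_toFinset, Set.mem_setOf_eq] at hb
  exact hf b hb

theorem ballMass_sub_le {C : Type} (p q : Ball C → ℝ) (S : Set (Ball C)) (hS : S.Finite)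
    (hp : ∀ b ∉ S, p b = 0) (hq : ∀ b ∉ S, q b = 0) (δ : ℝ)
    (hpq : ∀ b, |p b - q b| ≤ δ) (A : Set (Ball C)) :
    |ballMass p A - ballMass q A| ≤ S.ncard * δ := by
  classical
  have habs0 : ∀ b ∉ S, |p b - q b| = 0 := fun b hb => by rw [hp b hb, hq b hb]; simp
  have hps := summable_of_support_subset hS hp A
  have hqs := summable_of_support_subset hS hq A
  have habsS : Summable (fun b : Ball C => |p b - q b|) :=
    summable_of_ne_finset_zero (s := hS.toFinset)
      (fun b hb => habs0 b (by simpa using hb))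
  have habsA : Summable (fun b : A => |p b - q b|) :=
    summable_of_support_subset hS habs0 A
  have h1 : ballMass p A - ballMass q A = ∑' b : A, (p b - q b) :=
    (Summable.tsum_sub hps hqs).symm
  rw [h1]
  calc |∑' b : A, (p ↑b - q ↑b)| ≤ ∑' b : A, |p ↑b - q ↑b| := by
        simpa [Real.norm_eq_abs] using norm_tsum_le_tsum_norm (f := fun b : A => p ↑b - q ↑b)
          (by simpa [Real.norm_eq_abs] using habsA)
    _ ≤ ∑' b : Ball C, |p b - q b| :=
        Summable.tsum_subtype_le _ A (fun b => abs_nonneg _) habsS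
    _ = ∑ b ∈ hS.toFinset, |p b - q b| :=
        tsum_eq_sum (fun b hb => habs0 b (by simpa using hb))
    _ ≤ hS.toFinset.card • δ :=
        Finset.sum_le_card_nsmul _ _ _ (fun b _ => hpq b)
    _ = S.ncard * δ := by
        rw [nsmul_eq_mul, Set.ncard_eq_toFinset_card _ hS]

theorem dvar_le_of_close {C : Type} (p q : Ball C → ℝ) (S : Set (Ball C)) (hS : S.Finite)
    (hp : ∀ b ∉ S, p b = 0) (hq : ∀ b ∉ S, q b = 0) (δ : ℝ)
    (hpq : ∀ b, |p b - q b| ≤ δ) : dvar p q ≤ S.ncard * δ := by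
  apply ciSup_le
  exact ballMass_sub_le p q S hS hp hq δ hpq

theorem finProb_nonneg {V C : Type} [Fintype V] (G : SimpleGraph V) (c : V → C) (r : ℕ)
    (β : Ball C) : 0 ≤ finProb G c r β := by
  unfold finProb
  positivity

theorem finProb_le_one {V C : Type} [Fintype V] (G : SimpleGraph V) (c : V → C) (r : ℕ)
    (β : Ball C) : finProb G c r β ≤ 1 := by
  unfold finProb
  rcases Nat.eq_zero_or_pos (Fintype.card V) with h | h
  · rw [h]
    simp
  · rw [div_le_one (by exact_mod_cast h)]
    have : {x : V | finBallAt G c r x = β}.ncard ≤ (Set.univ : Set V).ncard :=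
      Set.ncard_le_ncard (Set.subset_univ _) (Set.toFinite _)
    rw [Set.ncard_univ, Nat.card_eq_fintype_card] at this
    exact_mod_cast this

theorem disc_eq_imp {M : ℕ} (hM : 0 < M) {x y : ℝ} (hx0 : 0 ≤ x) (hx1 : x ≤ 1)
    (hy0 : 0 ≤ y) (hy1 : y ≤ 1) (h : min ⌊x * M⌋₊ M = min ⌊y * M⌋₊ M) :
    |x - y| ≤ 1 / M := by
  have hMR : (0 : ℝ) < M := by exact_mod_cast hM
  have hxM : ⌊x * M⌋₊ ≤ M := by
    calc ⌊x * M⌋₊ ≤ ⌊(M : ℝ)⌋₊ := Nat.floor_le_floor (by nlinarith)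
      _ = M := Nat.floor_natCast M
  have hyM : ⌊y * M⌋₊ ≤ M := by
    calc ⌊y * M⌋₊ ≤ ⌊(M : ℝ)⌋₊ := Nat.floor_le_floor (by nlinarith)
      _ = M := Nat.floor_natCast M
  rw [min_eq_left hxM, min_eq_left hyM] at h
  have h1 : (⌊x * M⌋₊ : ℝ) ≤ x * M := Nat.floor_le (by positivity)
  have h2 : x * M < ⌊x * M⌋₊ + 1 := Nat.lt_floor_add_one _
  have h3 : (⌊y * M⌋₊ : ℝ) ≤ y * M := Nat.floor_le (by positivity)
  have h4 : y * M < ⌊y * M⌋₊ + 1 := Nat.lt_floor_add_one _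
  have hcast : (⌊x * M⌋₊ : ℝ) = (⌊y * M⌋₊ : ℝ) := by exact_mod_cast h
  have key : |x * M - y * M| ≤ 1 := by
    rw [abs_le]
    constructor <;> nlinarith
  have key2 : |x - y| * M ≤ 1 := by
    calc |x - y| * M = |x - y| * |(M : ℝ)| := by rw [abs_of_pos hMR]
      _ = |x * M - y * M| := by rw [← abs_mul, sub_mul]
      _ ≤ 1 := key
  rw [le_div_iff₀ hMR]
  exact key2


open Finset in
/-- Greedy coloring: a finite graph with all degrees `< s` has a proper `s`-coloring. -/
theorem greedy_coloring {V : Type} [Fintype V] (H : SimpleGraph V) (s : ℕ) (hs : 0 < s)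
    (hdeg : ∀ v, (H.neighborSet v).ncard < s) :
    ∃ c : V → Fin s, ∀ v w, H.Adj v w → c v ≠ c w := by
  classical
  suffices h : ∀ A : Finset V, ∃ c : V → Fin s, ∀ v w, v ∈ A → w ∈ A → H.Adj v w → c v ≠ c w by
    obtain ⟨c, hc⟩ := h Finset.univ
    exact ⟨c, fun v w h => hc v w (mem_univ v) (mem_univ w) h⟩
  intro A
  induction A using Finset.induction_on with
  | empty => exact ⟨fun _ => ⟨0, hs⟩, fun v w hv => absurd hv (notMem_empty v)⟩
  | @insert a A ha ih =>
    obtain ⟨c, hc⟩ := ih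
    set used : Finset (Fin s) := (A.filter (fun u => H.Adj a u)).image c with hused
    have hcard : used.card < s := by
      have h1 : (A.filter (fun u => H.Adj a u)) ⊆ (H.neighborSet a).toFinset := by
        intro u hu
        simp only [Set.mem_toFinset, SimpleGraph.mem_neighborSet]
        exact (Finset.mem_filter.mp hu).2
      calc used.card ≤ (A.filter (fun u => H.Adj a u)).card := Finset.card_image_le
        _ ≤ (H.neighborSet a).toFinset.card := Finset.card_le_card h1
        _ = (H.neighborSet a).ncard := by rw [Set.ncard_eq_toFinset_card']
        _ < s := hdeg a
    have hne : usedᶜ.Nonempty := by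
      rw [← Finset.card_pos, Finset.card_compl]
      simp only [Fintype.card_fin]
      omega
    obtain ⟨f, hf⟩ := hne
    rw [Finset.mem_compl] at hf
    refine ⟨Function.update c a f, fun v w hv hw hadj => ?_⟩
    rcases Finset.mem_insert.mp hv with rfl | hvA
    · rcases Finset.mem_insert.mp hw with rfl | hwA
      · exact absurd hadj (H.irrefl)
      · have hwa : w ≠ v := fun h => H.irrefl (h ▸ hadj)
        rw [Function.update_self, Function.update_of_ne hwa]
        intro h
        exact hf (Finset.mem_image.mpr ⟨w, Finset.mem_filter.mpr ⟨hwA, hadj⟩, h.symm⟩)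
    · rcases Finset.mem_insert.mp hw with rfl | hwA
      · have hva : v ≠ w := fun h => H.irrefl (h ▸ hadj)
        rw [Function.update_self, Function.update_of_ne hva]
        intro h
        exact hf (Finset.mem_image.mpr ⟨v, Finset.mem_filter.mpr ⟨hvA, hadj.symm⟩, h⟩)
      · have hva : v ≠ a := fun h => ha (h ▸ hvA)
        have hwa : w ≠ a := fun h => ha (h ▸ hwA)
        rw [Function.update_of_ne hva, Function.update_of_ne hwa]
        exact hc v w hvA hwA hadj

/-- **Regularization lemma.** For all `r, k ≥ 1` and `ε > 0` there is
`t = t_{r,k,ε}` such that every graph `G` of maximum degree at most `d` has a vertex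
coloring `q` with `t` colors such that: (i) vertices with the same `q`-color coincide or
are at distance at least `r+1` in `G`; (ii) for every `k`-coloring `g` of `V(G)` there is
`α : [t] → [k]` with `d_var(P_{G,r}[g], P_{G,r}[α ∘ q]) ≤ ε`. -/
theorem regularization (d : ℕ) (hd : 1 ≤ d) (r k : ℕ) (hr : 1 ≤ r) (hk : 1 ≤ k)
    (ε : ℝ) (hε : 0 < ε) :
    ∃ t : ℕ, ∀ (V : Type) [Fintype V] (G : SimpleGraph V),
      (∀ v, (G.neighborSet v).ncard ≤ d) →
      ∃ q : V → Fin t,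
        (∀ v w : V, q v = q w → v = w ∨ ∀ p : G.Walk v w, r + 1 ≤ p.length) ∧
        ∀ g : V → Fin k, ∃ α : Fin t → Fin k,
          dvar (finProb G g r) (finProb G (fun v => α (q v)) r) ≤ ε := by
  classical
  set B := (d + 1) ^ r with hB
  have hB1 : 1 ≤ B := Nat.one_le_pow _ _ (by omega)
  set S := smallBalls (Fin k) B with hSdef
  have hS : S.Finite := smallBalls_finite _ _
  set NS := S.ncard with hNS
  set M := ⌈(NS : ℝ) / ε⌉₊ + 1 with hMdef
  have hMpos : 0 < M := Nat.succ_pos _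
  have hMbound : (NS : ℝ) * (1 / M) ≤ ε := by
    have h1 : (NS : ℝ) / ε ≤ M := by
      calc (NS : ℝ) / ε ≤ ⌈(NS : ℝ) / ε⌉₊ := Nat.le_ceil _
        _ ≤ M := by exact_mod_cast Nat.le_succ _
    have hMR : (0 : ℝ) < M := by exact_mod_cast hMpos
    rw [div_le_iff₀ hε] at h1
    rw [mul_one_div, div_le_iff₀ hMR]
    linarith
  letI : Fintype ↥S := hS.fintype
  set CT := (↥S → Fin (M + 1)) with hCT
  set K := (Fin B × (CT → Fin k)) with hK
  letI : Fintype K := inferInstance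
  refine ⟨Fintype.card K, ?_⟩
  intro V _ G hdeg
  -- the auxiliary graph joining distinct vertices at distance at most r
  set H : SimpleGraph V :=
    { Adj := fun v w => v ≠ w ∧ ∃ p : G.Walk v w, p.length ≤ r
      symm := ⟨by
        rintro v w ⟨hne, p, hp⟩
        exact ⟨hne.symm, p.reverse, by rwa [SimpleGraph.Walk.length_reverse]⟩⟩
      loopless := ⟨fun v h => h.1 rfl⟩ } with hH
  have hHdeg : ∀ v, (H.neighborSet v).ncard < B := by
    intro v
    have hsub : H.neighborSet v ⊆ G.ballSet v r \ {v} := by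
      rintro u ⟨hne, p, hp⟩
      exact ⟨⟨⟨p⟩, le_trans (SimpleGraph.dist_le p) hp⟩, fun h => hne (h.symm ▸ rfl)⟩
    have hvmem : v ∈ G.ballSet v r :=
      ⟨SimpleGraph.Reachable.refl v, by rw [SimpleGraph.dist_self]; exact Nat.zero_le r⟩
    calc (H.neighborSet v).ncard ≤ (G.ballSet v r \ {v}).ncard :=
          Set.ncard_le_ncard hsub (Set.toFinite _)
      _ < (G.ballSet v r).ncard := Set.ncard_diff_singleton_lt_of_mem hvmem (Set.toFinite _)
      _ ≤ B := ballSet_ncard_le G d hdeg v r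
  obtain ⟨q₀, hq₀⟩ := greedy_coloring H B (by omega) hHdeg
  set disc : ℝ → Fin (M + 1) := fun x => ⟨min ⌊x * M⌋₊ M, by omega⟩ with hdisc
  set Cell : (V → Fin k) → CT := fun g b => disc (finProb G g r ↑b) with hCell
  set rep : CT → (V → Fin k) :=
    fun c => if h : ∃ g, Cell g = c then h.choose else fun _ => ⟨0, hk⟩ with hrep
  set q' : V → K := fun v => (q₀ v, fun c => rep c v) with hq'
  set eK := Fintype.equivFin K with heK
  refine ⟨fun v => eK (q' v), ?_, ?_⟩
  · intro v w h
    have hq'vw : q' v = q' w := eK.injective h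
    have h0 : q₀ v = q₀ w := congrArg Prod.fst hq'vw
    by_cases hvw : v = w
    · exact Or.inl hvw
    · refine Or.inr fun p => ?_
      by_contra hlen
      push_neg at hlen
      exact hq₀ v w ⟨hvw, p, by omega⟩ h0
  · intro g
    set c := Cell g with hc
    have hex : ∃ g', Cell g' = c := ⟨g, rfl⟩
    set g₀ := rep c with hg₀def
    have hg₀ : Cell g₀ = Cell g := by
      rw [hg₀def, hrep]
      simp only [dif_pos hex]
      exact hex.choose_spec
    refine ⟨fun j => ((eK.symm j).2) c, ?_⟩
    have hαq : (fun v => ((eK.symm (eK (q' v))).2) c) = g₀ := by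
      funext v
      rw [Equiv.symm_apply_apply]
    rw [hαq]
    have hpoint : ∀ β : Ball (Fin k), |finProb G g r β - finProb G g₀ r β| ≤ 1 / M := by
      intro β
      by_cases hβ : β ∈ S
      · have hdisceq := congrFun hg₀ ⟨β, hβ⟩
        rw [hCell] at hdisceq
        simp only at hdisceq
        have hmin : min ⌊finProb G g₀ r β * M⌋₊ M = min ⌊finProb G g r β * M⌋₊ M :=
          congrArg Fin.val hdisceq
        have habs := disc_eq_imp hMpos (finProb_nonneg G g₀ r β) (finProb_le_one G g₀ r β)
            (finProb_nonneg G g r β) (finProb_le_one G g r β) hmin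
        rw [abs_sub_comm] at habs
        exact habs
      · rw [finProb_eq_zero_of_not_mem G g r d hdeg β hβ,
            finProb_eq_zero_of_not_mem G g₀ r d hdeg β hβ]
        simp
    have hzero1 : ∀ β ∉ S, finProb G g r β = 0 :=
      fun β hβ => finProb_eq_zero_of_not_mem G g r d hdeg β hβ
    have hzero2 : ∀ β ∉ S, finProb G g₀ r β = 0 :=
      fun β hβ => finProb_eq_zero_of_not_mem G g₀ r d hdeg β hβ
    calc dvar (finProb G g r) (finProb G g₀ r) ≤ NS * (1 / M) :=
        dvar_le_of_close _ _ S hS hzero1 hzero2 _ hpoint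
      _ ≤ ε := hMbound
end
end

section
/- If there exists a local isomorphism φ : V(𝒢₁) → V(𝒢₂) between two graphings 𝒢₁ and 𝒢₂, then 𝒢₁ and 𝒢₂ are locally equivalent, and 𝒢₂ ≺ 𝒢₁ (that is, the closure of Q_{𝒢₂,r,k} is contained in the closure of Q_{𝒢₁,r,k} for every r, k ≥ 1). -/
open MeasureTheory Filter
open scoped ENNReal

noncomputable section

/-! ### Graphings -/

/-- A graphing: a bounded-degree Borel graph on a Polish probability space satisfying the
measure-preservation (involution invariance) condition
`∫_A e(x,B) dν(x) = ∫_B e(x,A) dν(x)`. -/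
structure Graphing (d : ℕ) : Type 1 where
  X : Type
  topX : TopologicalSpace X
  polishX : @PolishSpace X topX
  mX : MeasurableSpace X
  borelX : @BorelSpace X topX mX
  ν : @Measure X mX
  probν : IsProbabilityMeasure ν
  graph : SimpleGraph X
  edge_borel : MeasurableSet {p : X × X | graph.Adj p.1 p.2}
  nbr_finite : ∀ x, (graph.neighborSet x).Finite
  deg_le : ∀ x, (graph.neighborSet x).ncard ≤ d
  mpres : ∀ A B : Set X, MeasurableSet A → MeasurableSet B →
    ∫⁻ x in A, ((graph.neighborSet x ∩ B).ncard : ℝ≥0∞) ∂ν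
      = ∫⁻ x in B, ((graph.neighborSet x ∩ A).ncard : ℝ≥0∞) ∂ν

attribute [instance] Graphing.topX Graphing.polishX Graphing.mX Graphing.borelX Graphing.probν

/-- The colored rooted `r`-ball of the graphing at `x`. -/
def Graphing.ballCl {d : ℕ} (𝒢 : Graphing d) {C : Type} (c : 𝒢.X → C) (r : ℕ) (x : 𝒢.X) :
    Ball C :=
  ballAt 𝒢.graph c r x (𝒢.graph.ballSet_finite 𝒢.nbr_finite x r)

/-- `P_{𝒢,r}[c]`: the distribution of the `c`-colored `r`-ball around a `ν`-random
point of the graphing `𝒢`. -/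
def Graphing.P {d : ℕ} (𝒢 : Graphing d) {C : Type} (c : 𝒢.X → C) (r : ℕ) : Ball C → ℝ :=
  fun β => (𝒢.ν {x | 𝒢.ballCl c r x = β}).toReal

/-- `Q_{𝒢,r,k}`: the set of local statistics of all measurable `k`-colorings of `𝒢`. -/
def Graphing.Q {d : ℕ} (𝒢 : Graphing d) (r k : ℕ) : Set (Ball (Fin k) → ℝ) :=
  {p | ∃ c : 𝒢.X → Fin k, Measurable c ∧ p = 𝒢.P c r}

/-- Two graphings are locally equivalent if the distributions of (uncolored) rooted
`r`-balls of a random point agree for every `r`. -/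
def LocallyEquiv {d : ℕ} (𝒢₁ 𝒢₂ : Graphing d) : Prop :=
  ∀ r : ℕ, 𝒢₁.P (fun _ => (0 : Fin 1)) r = 𝒢₂.P (fun _ => (0 : Fin 1)) r

/-- The local-global partial order: `𝒢₁ ≺ 𝒢₂` iff `closure (Q_{𝒢₁,r,k}) ⊆ closure (Q_{𝒢₂,r,k})`
for all `r, k ≥ 1`. -/
def Graphing.Prec {d : ℕ} (𝒢₁ 𝒢₂ : Graphing d) : Prop :=
  ∀ r k : ℕ, 1 ≤ r → 1 ≤ k → tvClosure (𝒢₁.Q r k) ⊆ tvClosure (𝒢₂.Q r k)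

/-- A local isomorphism of graphings: a measure-preserving map which restricts to an
isomorphism between the connected component of any point and the connected component
of its image. -/
structure IsLocalIso {d : ℕ} (𝒢₁ 𝒢₂ : Graphing d) (φ : 𝒢₁.X → 𝒢₂.X) : Prop where
  measurePreserving : MeasurePreserving φ 𝒢₁.ν 𝒢₂.ν
  adj_map : ∀ x y, 𝒢₁.graph.Adj x y → 𝒢₂.graph.Adj (φ x) (φ y)
  comp_inj : ∀ x y, 𝒢₁.graph.Reachable x y → φ x = φ y → x = y
  comp_surj : ∀ x z, 𝒢₂.graph.Reachable (φ x) z → ∃ y, 𝒢₁.graph.Reachable x y ∧ φ y = z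
  adj_reflect : ∀ x y, 𝒢₁.graph.Reachable x y → 𝒢₂.graph.Adj (φ x) (φ y) → 𝒢₁.graph.Adj x y

/-! ### Auxiliary: capacitability and outer measure transfer -/

section Aux
open Set Topology

/-- Auxiliary recursively defined sequence of "prefix" functions. -/
private noncomputable def capSeq (choice : (ℕ → ℕ) → ℕ → ℕ) : ℕ → (ℕ → ℕ)
  | 0 => fun _ => 0
  | (k+1) => Function.update (capSeq choice k) k (choice (capSeq choice k) k)

/-- Constrained branch sets. -/
private def capS (N : ℕ → ℕ) (k : ℕ) : Set (ℕ → ℕ) := {x | ∀ j, j < k → x j ≤ N j}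

private lemma capS_congr {g g' : ℕ → ℕ} {k : ℕ} (hgg : ∀ j, j < k → g j = g' j) :
    capS g k = capS g' k := by
  ext x; constructor <;> intro hx j hj
  · rw [← hgg j hj]; exact hx j hj
  · rw [hgg j hj]; exact hx j hj

private lemma capS_antitone {N : ℕ → ℕ} : Antitone (capS N) := by
  intro k k' hkk x hx j hj
  exact hx j (lt_of_lt_of_le hj hkk)

/-- Choquet capacitability, in the form we need: an analytic set in a Polish space is
null-measurable for every finite Borel measure. -/
theorem analyticSet_nullMeasurableSet {Y : Type*} [TopologicalSpace Y] [PolishSpace Y]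
    [MeasurableSpace Y] [BorelSpace Y] {A : Set Y} (hA : MeasureTheory.AnalyticSet A)
    (ν : Measure Y) [IsFiniteMeasure ν] : NullMeasurableSet A ν := by
  letI := TopologicalSpace.upgradeIsCompletelyMetrizable Y
  -- key approximation claim
  have key : ∀ ε : ℝ≥0∞, ε ≠ 0 → ∃ M : Set Y, MeasurableSet M ∧ M ⊆ A ∧ ν A ≤ ν M + ε := by
    intro ε hε
    rw [MeasureTheory.AnalyticSet] at hA
    rcases hA with rfl | ⟨f, hf, rfl⟩
    · exact ⟨∅, MeasurableSet.empty, Subset.rfl, by simp⟩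
    -- choice step
    have step : ∀ (g : ℕ → ℕ) (k : ℕ), ∃ m : ℕ,
        ν (f '' capS g k) ≤ ν (f '' capS (Function.update g k m) (k+1)) + ε / 2 ^ (k+1) := by
      intro g k
      have hmono : Monotone (fun m => f '' capS (Function.update g k m) (k+1)) := by
        intro m m' hmm
        apply image_mono
        intro x hx j hj
        rcases Nat.lt_succ_iff_lt_or_eq.mp hj with hj' | rfl
        · have := hx j hj
          rwa [Function.update_of_ne (Nat.ne_of_lt hj')] at this ⊢
        · have := hx j hj
          rw [Function.update_self] at this ⊢
          exact this.trans hmm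
      have hun : (⋃ m, f '' capS (Function.update g k m) (k+1)) = f '' capS g k := by
        apply Subset.antisymm
        · refine iUnion_subset fun m => image_mono ?_
          intro x hx j hj
          have := hx j (Nat.lt_succ_of_lt hj)
          rwa [Function.update_of_ne (Nat.ne_of_lt hj)] at this
        · rintro y ⟨x, hx, rfl⟩
          refine mem_iUnion.mpr ⟨x k, ⟨x, fun j hj => ?_, rfl⟩⟩
          rcases Nat.lt_succ_iff_lt_or_eq.mp hj with hj' | rfl
          · rw [Function.update_of_ne (Nat.ne_of_lt hj')]; exact hx j hj'
          · rw [Function.update_self]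
      have hsup := hmono.measure_iUnion (μ := ν)
      rw [hun] at hsup
      by_cases hle : ν (f '' capS g k) ≤ ε / 2 ^ (k+1)
      · exact ⟨0, hle.trans (self_le_add_left _ _)⟩
      push_neg at hle
      have hδ : ε / 2 ^ (k+1) ≤ ν (f '' capS g k) := hle.le
      have hlt : ν (f '' capS g k) - ε / 2 ^ (k+1) < ν (f '' capS g k) :=
        ENNReal.sub_lt_self (measure_ne_top ν _)
          (fun h0 => by simp [h0] at hle)
          (ENNReal.div_pos hε (ENNReal.pow_ne_top ENNReal.ofNat_ne_top)).ne'
      obtain ⟨m, hm⟩ := lt_iSup_iff.mp (hlt.trans_le hsup.le)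
      refine ⟨m, ?_⟩
      exact tsub_le_iff_right.mp hm.le
    set pick : (ℕ → ℕ) → ℕ → ℕ := fun g k => (step g k).choose with hpick
    set N : ℕ → ℕ := fun k => capSeq pick (k+1) k with hN
    have hPN : ∀ k j, j < k → capSeq pick k j = N j := by
      intro k
      induction k with
      | zero => intro j hj; omega
      | succ k ih =>
        intro j hj
        rcases Nat.lt_succ_iff_lt_or_eq.mp hj with hj' | rfl
        · show Function.update (capSeq pick k) k (pick (capSeq pick k) k) j = N j
          rw [Function.update_of_ne (Nat.ne_of_lt hj')]
          exact ih j hj'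
        · rfl
    have hScoh : ∀ k, capS (capSeq pick k) k = capS N k :=
      fun k => capS_congr (fun j hj => hPN k j hj)
    have hstep : ∀ k, ν (f '' capS N k) ≤ ν (f '' capS N (k+1)) + ε / 2 ^ (k+1) := by
      intro k
      have hspec := (step (capSeq pick k) k).choose_spec
      have h1 : Function.update (capSeq pick k) k ((step (capSeq pick k) k).choose)
          = capSeq pick (k+1) := rfl
      rw [h1] at hspec
      rw [hScoh k, hScoh (k+1)] at hspec
      exact hspec
    have hinv : ∀ k, ν (f '' capS N 0) ≤ ν (f '' capS N k)
        + ∑ j ∈ Finset.range k, ε / 2 ^ (j+1) := by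
      intro k
      induction k with
      | zero => simp
      | succ k ih =>
        calc ν (f '' capS N 0) ≤ ν (f '' capS N k) + ∑ j ∈ Finset.range k, ε / 2 ^ (j+1) := ih
        _ ≤ (ν (f '' capS N (k+1)) + ε / 2 ^ (k+1)) + ∑ j ∈ Finset.range k, ε / 2 ^ (j+1) :=
            add_le_add_left (hstep k) _
        _ = ν (f '' capS N (k+1)) + ∑ j ∈ Finset.range (k+1), ε / 2 ^ (j+1) := by
            rw [Finset.sum_range_succ]; ring
    have hgeo : ∀ k, (∑ j ∈ Finset.range k, ε / 2 ^ (j+1)) ≤ ε := by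
      intro k
      have h1 : (∑ j ∈ Finset.range k, ε / 2 ^ (j+1)) ≤ ∑' j : ℕ, ε / 2 ^ (j+1) :=
        ENNReal.sum_le_tsum _
      refine h1.trans ?_
      have h2 : ∀ j : ℕ, ε / 2 ^ (j+1) = ε * 2⁻¹ * (2⁻¹ : ℝ≥0∞) ^ j := by
        intro j
        rw [div_eq_mul_inv, ← ENNReal.inv_pow, pow_succ, ENNReal.mul_inv (by simp) (by simp)]
        ring
      simp only [h2]
      rw [ENNReal.tsum_mul_left, ENNReal.tsum_geometric, ENNReal.one_sub_inv_two,
        mul_assoc, ENNReal.mul_inv_cancel (by simp) (by simp), mul_one]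
    have hA0 : range f = f '' capS N 0 := by
      have : capS N 0 = univ := by
        ext x; simp [capS]
      rw [this, image_univ]
    have hAk : ∀ k, ν (range f) ≤ ν (f '' capS N k) + ε := by
      intro k
      rw [hA0]
      exact (hinv k).trans (add_le_add_right (hgeo k) _)
    -- the compact set
    set K : Set (ℕ → ℕ) := univ.pi fun j => Iic (N j) with hK
    have hKcompact : IsCompact K := isCompact_univ_pi fun j => (finite_Iic (N j)).isCompact
    refine ⟨f '' K, ((hKcompact.image hf).isClosed.measurableSet), image_subset_range f K, ?_⟩
    -- the intersection of closures is inside f '' K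
    have hsub : (⋂ k, closure (f '' capS N k)) ⊆ f '' K := by
      intro y hy
      simp only [mem_iInter] at hy
      have hex : ∀ k : ℕ, ∃ x, x ∈ capS N (k+1) ∧ dist y (f x) < 1 / (k+1) := by
        intro k
        have := hy (k+1)
        rw [Metric.mem_closure_iff] at this
        obtain ⟨b, ⟨x, hx, rfl⟩, hb⟩ := this (1 / (k+1)) (by positivity)
        exact ⟨x, hx, hb⟩
      choose x hxS hxd using hex
      set z : ℕ → (ℕ → ℕ) := fun k j => min (x k j) (N j) with hz
      have hzK : ∀ k, z k ∈ K := by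
        intro k
        rw [mem_univ_pi]
        intro j
        exact mem_Iic.mpr (min_le_right _ _)
      obtain ⟨l, hlK, σ, hσ, hσtend⟩ := hKcompact.tendsto_subseq hzK
      have hx_tend : Tendsto (fun i => x (σ i)) atTop (𝓝 l) := by
        rw [tendsto_pi_nhds] at hσtend ⊢
        intro j
        refine (hσtend j).congr' ?_
        filter_upwards [eventually_ge_atTop j] with i hi
        have hji : j < σ i + 1 := Nat.lt_succ_of_le (hi.trans (hσ.le_apply))
        have := hxS (σ i) j hji
        simp only [z, Function.comp]
        rw [min_eq_left this]
      have hfl : Tendsto (fun i => f (x (σ i))) atTop (𝓝 (f l)) :=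
        (hf.tendsto l).comp hx_tend
      have hfy : Tendsto (fun k => f (x k)) atTop (𝓝 y) := by
        rw [Metric.tendsto_atTop]
        intro δ hδ
        obtain ⟨n, hn⟩ := exists_nat_one_div_lt hδ
        refine ⟨n, fun k hk => ?_⟩
        rw [dist_comm]
        calc dist y (f (x k)) < 1 / (k+1) := hxd k
        _ ≤ 1 / (n+1) := by
            have hle : ((n:ℝ)+1) ≤ (k:ℝ)+1 := by
              have : (n:ℝ) ≤ k := Nat.cast_le.mpr hk
              linarith
            exact one_div_le_one_div_of_le (by positivity) hle
        _ < δ := hn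
      have hfy' : Tendsto (fun i => f (x (σ i))) atTop (𝓝 y) :=
        hfy.comp hσ.tendsto_atTop
      have : f l = y := tendsto_nhds_unique hfl hfy'
      exact this ▸ ⟨l, hlK, rfl⟩
    have hmeas_iInter : ν (⋂ k, closure (f '' capS N k))
        = ⨅ k, ν (closure (f '' capS N k)) := by
      refine Antitone.measure_iInter ?_ (fun k => isClosed_closure.measurableSet.nullMeasurableSet)
        ⟨0, measure_ne_top ν _⟩
      intro k k' hkk
      exact closure_mono (image_mono (capS_antitone hkk))
    calc ν (range f) ≤ ⨅ k, (ν (closure (f '' capS N k)) + ε) := by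
          refine le_iInf fun k => ?_
          exact (hAk k).trans (add_le_add_left (measure_mono subset_closure) _)
    _ = (⨅ k, ν (closure (f '' capS N k))) + ε := by
          rw [ENNReal.iInf_add]
    _ = ν (⋂ k, closure (f '' capS N k)) + ε := by rw [hmeas_iInter]
    _ ≤ ν (f '' K) + ε := add_le_add_left (measure_mono hsub) _
  -- deduce null-measurability
  have : ∀ n : ℕ, ∃ M : Set Y, MeasurableSet M ∧ M ⊆ A ∧ ν A ≤ ν M + 1 / (n+1) := by
    intro n
    exact key (1 / (n+1)) (by simp)
  choose M hMmeas hMsub hMle using this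
  set M' : Set Y := ⋃ n, M n with hM'
  have hM'meas : MeasurableSet M' := MeasurableSet.iUnion hMmeas
  have hM'sub : M' ⊆ A := iUnion_subset hMsub
  have hle : ν A ≤ ν M' := by
    refine ENNReal.le_of_forall_pos_le_add fun δ hδ hfin => ?_
    obtain ⟨n, hn⟩ := ENNReal.exists_inv_nat_lt (a := (δ : ℝ≥0∞)) (by exact_mod_cast hδ.ne')
    calc ν A ≤ ν (M n) + 1 / (n+1) := hMle n
    _ ≤ ν M' + 1 / (n+1) := add_le_add_left (measure_mono (subset_iUnion M n)) _
    _ ≤ ν M' + δ := by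
        refine add_le_add_right ?_ _
        rw [one_div]
        refine le_trans ?_ hn.le
        exact ENNReal.inv_le_inv.mpr le_self_add
  have hdiff : ν (A \ M') = 0 := by
    have h1 := measure_inter_add_diff (μ := ν) A hM'meas
    rw [inter_eq_self_of_subset_right hM'sub] at h1
    have h3 : ν M' + ν (A \ M') ≤ ν M' + 0 := by
      rw [add_zero]; exact h1.le.trans hle
    exact le_zero_iff.mp ((ENNReal.add_le_add_iff_left (measure_ne_top ν _)).mp h3)
  have hAeq : M' ∪ A \ M' = A := union_diff_cancel hM'sub
  exact hAeq ▸ (hM'meas.nullMeasurableSet.union (NullMeasurableSet.of_null hdiff))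

/-- A measure preserving map between Polish probability spaces pulls back the **outer**
measure of an arbitrary (possibly non-measurable) set correctly. -/
theorem mp_outer_measure_preimage {X Y : Type*} [TopologicalSpace X]
    [PolishSpace X] [MeasurableSpace X] [BorelSpace X] [TopologicalSpace Y] [PolishSpace Y]
    [MeasurableSpace Y] [BorelSpace Y] {μ : Measure X} {ν : Measure Y} [IsFiniteMeasure ν]
    {f : X → Y} (hf : MeasurePreserving f μ ν) (S : Set Y) : ν S = μ (f ⁻¹' S) := by
  have hmap : ∀ (V : Set Y), MeasurableSet V → ν V = μ (f ⁻¹' V) := by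
    intro V hV
    rw [← hf.map_eq, Measure.map_apply hf.measurable hV]
  refine le_antisymm ?_ ?_
  · set W := toMeasurable μ (f ⁻¹' S) with hWdef
    have hWmeas : MeasurableSet W := measurableSet_toMeasurable μ _
    have hWsub : f ⁻¹' S ⊆ W := subset_toMeasurable μ _
    have hWm : μ W = μ (f ⁻¹' S) := measure_toMeasurable _
    have hAan : MeasureTheory.AnalyticSet (f '' Wᶜ) :=
      (hWmeas.compl).analyticSet_image hf.measurable
    obtain ⟨A', hA'meas, hAA'⟩ := analyticSet_nullMeasurableSet hAan ν
    have hnull : ν ((f '' Wᶜ) \ A' ∪ A' \ (f '' Wᶜ)) = 0 := by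
      rw [MeasureTheory.ae_eq_set] at hAA'
      exact measure_union_null hAA'.1 hAA'.2
    set D := toMeasurable ν ((f '' Wᶜ) \ A' ∪ A' \ (f '' Wᶜ)) with hDdef
    have hDmeas : MeasurableSet D := measurableSet_toMeasurable ν _
    have hDsub : (f '' Wᶜ) \ A' ∪ A' \ (f '' Wᶜ) ⊆ D := subset_toMeasurable ν _
    have hDnull : ν D = 0 := by rw [measure_toMeasurable]; exact hnull
    set U := A'ᶜ ∪ D with hUdef
    have hUmeas : MeasurableSet U := hA'meas.compl.union hDmeas
    have hSU : S ⊆ U := by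
      intro y hy
      have hynot : y ∉ f '' Wᶜ := by
        rintro ⟨w, hw, rfl⟩
        exact hw (hWsub hy)
      by_cases hyA : y ∈ A'
      · exact Or.inr (hDsub (Or.inr ⟨hyA, hynot⟩))
      · exact Or.inl hyA
    have hpre : f ⁻¹' U ⊆ W ∪ f ⁻¹' D := by
      intro x hx
      rcases hx with hx | hx
      · by_cases hxW : x ∈ W
        · exact Or.inl hxW
        · exact Or.inr (hDsub (Or.inl ⟨⟨x, hxW, rfl⟩, hx⟩))
      · exact Or.inr hx
    calc ν S ≤ ν U := measure_mono hSU
    _ = μ (f ⁻¹' U) := hmap U hUmeas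
    _ ≤ μ W + μ (f ⁻¹' D) := (measure_mono hpre).trans (measure_union_le _ _)
    _ = μ (f ⁻¹' S) + ν D := by rw [hWm, ← hmap D hDmeas]
    _ = μ (f ⁻¹' S) := by rw [hDnull, add_zero]
  · exact (Measure.le_map_apply hf.measurable.aemeasurable S).trans_eq
      (by rw [hf.map_eq])

end Aux


/-! ### Auxiliary lemmas: local isomorphisms of graphings -/

namespace IsLocalIso

variable {d : ℕ} {𝒢₁ 𝒢₂ : Graphing d} {φ : 𝒢₁.X → 𝒢₂.X}

/-- The underlying graph homomorphism of a local isomorphism. -/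
def toHom (h : IsLocalIso 𝒢₁ 𝒢₂ φ) : 𝒢₁.graph →g 𝒢₂.graph :=
  ⟨φ, fun {a b} hab => h.adj_map a b hab⟩

theorem reach_map (h : IsLocalIso 𝒢₁ 𝒢₂ φ) {x y : 𝒢₁.X} (hre : 𝒢₁.graph.Reachable x y) :
    𝒢₂.graph.Reachable (φ x) (φ y) :=
  hre.map h.toHom

theorem lift_walk (h : IsLocalIso 𝒢₁ 𝒢₂ φ) : ∀ {a b : 𝒢₂.X} (w : 𝒢₂.graph.Walk a b)
    (x : 𝒢₁.X), φ x = a →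
    ∃ (y : 𝒢₁.X) (w' : 𝒢₁.graph.Walk x y), φ y = b ∧ w'.length = w.length := by
  intro a b w
  induction w with
  | nil => exact fun x hx => ⟨x, SimpleGraph.Walk.nil, hx, rfl⟩
  | @cons a u b hadj w ih =>
    intro x hx
    obtain ⟨y₁, hre, hy₁⟩ := h.comp_surj x u (by rw [hx]; exact hadj.reachable)
    have hadj1 : 𝒢₁.graph.Adj x y₁ :=
      h.adj_reflect x y₁ hre (by rw [hx, hy₁]; exact hadj)
    obtain ⟨y, w', hy, hl⟩ := ih y₁ hy₁
    exact ⟨y, SimpleGraph.Walk.cons hadj1 w', hy, by simp [hl]⟩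

theorem dist_eq (h : IsLocalIso 𝒢₁ 𝒢₂ φ) {x y : 𝒢₁.X} (hre : 𝒢₁.graph.Reachable x y) :
    𝒢₂.graph.dist (φ x) (φ y) = 𝒢₁.graph.dist x y := by
  apply le_antisymm
  · obtain ⟨p, hp⟩ := hre.exists_walk_length_eq_dist
    calc 𝒢₂.graph.dist (φ x) (φ y) ≤ (p.map h.toHom).length := SimpleGraph.dist_le _
    _ = p.length := by simp
    _ = 𝒢₁.graph.dist x y := hp
  · obtain ⟨q, hq⟩ := (h.reach_map hre).exists_walk_length_eq_dist
    obtain ⟨y', w', hy', hl⟩ := h.lift_walk q x rfl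
    have hyy : y' = y := h.comp_inj y' y (w'.reachable.symm.trans hre) (by rw [hy'])
    calc 𝒢₁.graph.dist x y = 𝒢₁.graph.dist x y' := by rw [hyy]
    _ ≤ w'.length := SimpleGraph.dist_le w'
    _ = q.length := hl
    _ = 𝒢₂.graph.dist (φ x) (φ y) := hq

theorem mem_ball_map (h : IsLocalIso 𝒢₁ 𝒢₂ φ) {x y : 𝒢₁.X} {r : ℕ}
    (hy : y ∈ 𝒢₁.graph.ballSet x r) : φ y ∈ 𝒢₂.graph.ballSet (φ x) r :=
  ⟨h.reach_map hy.1, by rw [h.dist_eq hy.1]; exact hy.2⟩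

theorem ball_surj (h : IsLocalIso 𝒢₁ 𝒢₂ φ) {x : 𝒢₁.X} {r : ℕ} {z : 𝒢₂.X}
    (hz : z ∈ 𝒢₂.graph.ballSet (φ x) r) : ∃ y ∈ 𝒢₁.graph.ballSet x r, φ y = z := by
  obtain ⟨y, hre, hy⟩ := h.comp_surj x z hz.1
  refine ⟨y, ⟨hre, ?_⟩, hy⟩
  have hd := h.dist_eq hre
  rw [hy] at hd
  rw [← hd]
  exact hz.2

/-- The central combinatorial fact: a local isomorphism maps the colored `r`-ball at `x`
isomorphically to the colored `r`-ball at `φ x`. -/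
theorem ballCl_comp (h : IsLocalIso 𝒢₁ 𝒢₂ φ) {C : Type} (c : 𝒢₂.X → C) (r : ℕ) (x : 𝒢₁.X) :
    𝒢₁.ballCl (fun a => c (φ a)) r x = 𝒢₂.ballCl c r (φ x) := by
  apply Quotient.sound
  have hmap : ∀ u : ↥(𝒢₁.graph.ballSet x r), φ u.1 ∈ 𝒢₂.graph.ballSet (φ x) r :=
    fun u => h.mem_ball_map u.2
  let F : ↥(𝒢₁.graph.ballSet x r) → ↥(𝒢₂.graph.ballSet (φ x) r) := fun u => ⟨φ u.1, hmap u⟩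
  have hFbij : Function.Bijective F := by
    constructor
    · intro u v huv
      exact Subtype.ext (h.comp_inj _ _ (u.2.1.symm.trans v.2.1) (congrArg Subtype.val huv))
    · intro z
      obtain ⟨y, hy, hyz⟩ := h.ball_surj z.2
      exact ⟨⟨y, hy⟩, Subtype.ext hyz⟩
  refine ⟨⟨Equiv.ofBijective F hFbij, ?_⟩, ?_, ?_⟩
  · intro u v
    show 𝒢₂.graph.Adj (φ u.1) (φ v.1) ↔ 𝒢₁.graph.Adj u.1 v.1
    exact ⟨fun ha => h.adj_reflect _ _ (u.2.1.symm.trans v.2.1) ha,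
      fun ha => h.adj_map _ _ ha⟩
  · exact Subtype.ext rfl
  · intro v; rfl

theorem P_comp (h : IsLocalIso 𝒢₁ 𝒢₂ φ) {C : Type} (c : 𝒢₂.X → C) (r : ℕ) :
    𝒢₁.P (fun a => c (φ a)) r = 𝒢₂.P c r := by
  funext β
  show (𝒢₁.ν {x | 𝒢₁.ballCl (fun a => c (φ a)) r x = β}).toReal
      = (𝒢₂.ν {y | 𝒢₂.ballCl c r y = β}).toReal
  have hset : {x | 𝒢₁.ballCl (fun a => c (φ a)) r x = β}
      = φ ⁻¹' {y | 𝒢₂.ballCl c r y = β} := by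
    ext x
    simp only [Set.mem_setOf_eq, Set.mem_preimage]
    rw [h.ballCl_comp c r x]
  rw [hset, ← mp_outer_measure_preimage h.measurePreserving]

end IsLocalIso


/-- A local isomorphism `φ : 𝒢₁ → 𝒢₂` implies that `𝒢₁` and `𝒢₂` are
locally equivalent, and `𝒢₂ ≺ 𝒢₁`. -/
theorem localIso_implies_localEquiv_and_prec (d : ℕ) (𝒢₁ 𝒢₂ : Graphing d)
    (φ : 𝒢₁.X → 𝒢₂.X) (h : IsLocalIso 𝒢₁ 𝒢₂ φ) :
    LocallyEquiv 𝒢₁ 𝒢₂ ∧ Graphing.Prec 𝒢₂ 𝒢₁ := by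
  constructor
  · intro r
    exact h.P_comp (fun _ => (0 : Fin 1)) r
  · intro r k _ _ p hp ε hε
    obtain ⟨q, hq, hdvar⟩ := hp ε hε
    obtain ⟨c, hc, rfl⟩ := hq
    refine ⟨𝒢₁.P (fun a => c (φ a)) r,
      ⟨fun a => c (φ a), hc.comp h.measurePreserving.measurable, rfl⟩, ?_⟩
    rw [h.P_comp c r]
    exact hdvar
end
end

section
/- Let 𝒢 be a graphing on (X, ν) and let L = D − 𝒢 be its Laplace operator on L²(X, ν), where (Df)(x) = deg(x) f(x) and (𝒢f)(x) = Σ_{(x,v) ∈ E(𝒢)} f(v). Then the multiplicity of the eigenvalue 0 of L is 1 — i.e. the kernel of L in L²(X, ν) consists exactly of the constant functions — if and only if 𝒢 is ergodic. -/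
open MeasureTheory Filter
open scoped ENNReal

noncomputable section

/-! ### Graphings as operators -/

/-- The degree of a point of a graphing. -/
def Graphing.deg {d : ℕ} (𝒢 : Graphing d) (x : 𝒢.X) : ℕ :=
  (𝒢.graph.neighborSet x).ncard

/-- The adjacency operator of a graphing acting on complex functions:
`(𝒢 f)(x) = ∑_{(x,v) ∈ E(𝒢)} f(v)`. -/
def Graphing.adjOp {d : ℕ} (𝒢 : Graphing d) (f : 𝒢.X → ℂ) (x : 𝒢.X) : ℂ :=
  ∑ᶠ v ∈ 𝒢.graph.neighborSet x, f v

/-- The Laplace operator `L = D - 𝒢` of a graphing. -/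
def Graphing.lap {d : ℕ} (𝒢 : Graphing d) (f : 𝒢.X → ℂ) (x : 𝒢.X) : ℂ :=
  (𝒢.deg x : ℂ) * f x - 𝒢.adjOp f x

/-- The adjacency operator acting on real functions. -/
def Graphing.adjOpR {d : ℕ} (𝒢 : Graphing d) (f : 𝒢.X → ℝ) (x : 𝒢.X) : ℝ :=
  ∑ᶠ v ∈ 𝒢.graph.neighborSet x, f v

/-- A graphing is `d`-regular if every point has exactly `d` neighbours. -/
def Graphing.IsRegular {d : ℕ} (𝒢 : Graphing d) : Prop :=
  ∀ x, (𝒢.graph.neighborSet x).ncard = d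

/-- A graphing is a `c`-expander if `ν(N₁(S)) ≥ (1+c)·ν(S)` for every Borel set `S` with
`0 < ν(S) ≤ 1/2`, where `N₁(S)` is the `1`-neighborhood of `S`. -/
def Graphing.IsExpander {d : ℕ} (𝒢 : Graphing d) (c : ℝ) : Prop :=
  ∀ S : Set 𝒢.X, MeasurableSet S → 0 < 𝒢.ν S → 𝒢.ν S ≤ 1 / 2 →
    (1 + c) * (𝒢.ν S).toReal ≤ (𝒢.ν (⋃ x ∈ S, 𝒢.graph.ballSet x 1)).toReal

/-- The spectral gap of a `d`-regular graphing: `inf { ⟨Lf,f⟩ : ‖f‖₂ = 1, ⟨f,1⟩ = 0 }`. -/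
def Graphing.gap {d : ℕ} (𝒢 : Graphing d) : ℝ :=
  sInf {t : ℝ | ∃ f : 𝒢.X → ℝ, MemLp f 2 𝒢.ν ∧ (∫ x, (f x) ^ 2 ∂𝒢.ν) = 1 ∧
    (∫ x, f x ∂𝒢.ν) = 0 ∧ t = ∫ x, ((d : ℝ) * f x - 𝒢.adjOpR f x) * f x ∂𝒢.ν}

/-- A graphing is ergodic if the vertex set cannot be partitioned into two positive-measure
Borel sets with no edges between them. -/
def Graphing.IsErgodic {d : ℕ} (𝒢 : Graphing d) : Prop :=
  ¬ ∃ A : Set 𝒢.X, MeasurableSet A ∧ 0 < 𝒢.ν A ∧ 𝒢.ν A < 1 ∧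
      ∀ x y, x ∈ A → 𝒢.graph.Adj x y → y ∈ A


namespace LapErg
open Set

variable {X : Type} [TopologicalSpace X] [PolishSpace X] [MeasurableSpace X] [BorelSpace X]

/-- `x` has at least `k` distinct "neighbours" in the Borel set `E ⊆ X × ℝ`. -/
def HasDistinct (E : Set (X × ℝ)) (k : ℕ) (x : X) : Prop :=
  ∃ y : Fin k → ℝ, Function.Injective y ∧ ∀ j, (x, y j) ∈ E

theorem analyticSet_proj {E : Set (X × ℝ)} (hE : MeasurableSet E) :
    AnalyticSet (Prod.fst '' E) :=
  hE.analyticSet.image_of_continuous continuous_fst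

theorem analyticSet_hasDistinct (E : Set (X × ℝ)) (hE : MeasurableSet E) (k : ℕ) :
    AnalyticSet {x | HasDistinct E k x} := by
  rcases Nat.eq_zero_or_pos k with rfl | hk
  · have : {x | HasDistinct E 0 x} = univ := by
      ext x
      simp only [mem_setOf_eq, mem_univ, iff_true]
      exact ⟨Fin.elim0, Function.injective_of_subsingleton _, fun j => j.elim0⟩
    rw [this]
    exact MeasurableSet.univ.analyticSet
  · haveI : Nonempty (Fin k) := ⟨⟨0, hk⟩⟩
    -- index: k rational intervals, pairwise disjoint
    set I := {q : Fin k → ℚ × ℚ //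
        ∀ i j : Fin k, i ≠ j →
          Ioo ((q i).1 : ℝ) ((q i).2 : ℝ) ∩ Ioo ((q j).1 : ℝ) ((q j).2 : ℝ) = ∅} with hI
    have : {x | HasDistinct E k x} =
        ⋃ q : I, ⋂ j : Fin k,
          Prod.fst '' (E ∩ {p : X × ℝ | p.2 ∈ Ioo ((q.1 j).1 : ℝ) ((q.1 j).2 : ℝ)}) := by
      ext x
      simp only [mem_setOf_eq, mem_iUnion, mem_iInter]
      constructor
      · rintro ⟨y, hyinj, hyE⟩
        -- find δ > 0 below all gaps
        obtain ⟨δ, hδpos, hδ⟩ : ∃ δ : ℝ, 0 < δ ∧ ∀ i j : Fin k, i ≠ j → δ ≤ |y i - y j| := by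
          set S : Finset (Fin k × Fin k) := Finset.univ.filter (fun p => p.1 ≠ p.2)
          rcases S.eq_empty_or_nonempty with hS | hS
          · exact ⟨1, one_pos, fun i j hij => absurd (Finset.eq_empty_iff_forall_notMem.mp hS
              (i, j)) (by simp [S, hij])⟩
          · set T := S.image (fun p => |y p.1 - y p.2|)
            have hT : T.Nonempty := hS.image _
            refine ⟨T.min' hT, ?_, fun i j hij => Finset.min'_le _ _ ?_⟩
            · obtain ⟨p, hp, hval⟩ := Finset.mem_image.mp (T.min'_mem hT)
              have hne : p.1 ≠ p.2 := (Finset.mem_filter.mp hp).2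
              rw [← hval]
              exact abs_pos.mpr (sub_ne_zero.mpr (fun h => hne (hyinj h)))
            · exact Finset.mem_image.mpr ⟨(i, j), by simp [S, hij], rfl⟩
        -- choose rational intervals around each y j
        have hchoice : ∀ j : Fin k, ∃ ab : ℚ × ℚ,
            y j ∈ Ioo ((ab.1 : ℝ)) (ab.2 : ℝ) ∧
            Ioo ((ab.1 : ℝ)) (ab.2 : ℝ) ⊆ Ioo (y j - δ / 2) (y j + δ / 2) := by
          intro j
          obtain ⟨a, ha1, ha2⟩ := exists_rat_btwn (show y j - δ / 2 < y j by linarith)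
          obtain ⟨b, hb1, hb2⟩ := exists_rat_btwn (show y j < y j + δ / 2 by linarith)
          exact ⟨(a, b), ⟨ha2, hb1⟩, fun z hz => ⟨lt_of_le_of_lt (le_of_lt ha1) hz.1,
            lt_of_lt_of_le hz.2 (le_of_lt hb2)⟩⟩
        choose q hq1 hq2 using hchoice
        have hdisj : ∀ i j : Fin k, i ≠ j →
            Ioo ((q i).1 : ℝ) ((q i).2 : ℝ) ∩ Ioo ((q j).1 : ℝ) ((q j).2 : ℝ) = ∅ := by
          intro i j hij
          rw [eq_empty_iff_forall_notMem]
          rintro z ⟨hzi, hzj⟩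
          have h1 := hq2 i hzi
          have h2 := hq2 j hzj
          simp only [mem_Ioo] at h1 h2
          have habs := hδ i j hij
          rcases abs_cases (y i - y j) with ⟨he, _⟩ | ⟨he, _⟩ <;> rw [he] at habs <;> linarith
        refine ⟨⟨q, hdisj⟩, fun j => ⟨(x, y j), ⟨hyE j, hq1 j⟩, rfl⟩⟩
      · rintro ⟨⟨q, hq⟩, hx⟩
        have : ∀ j : Fin k, ∃ z : ℝ, (x, z) ∈ E ∧ z ∈ Ioo ((q j).1 : ℝ) ((q j).2 : ℝ) := by
          intro j
          obtain ⟨p, ⟨hpE, hpI⟩, hpx⟩ := hx j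
          refine ⟨p.2, ?_, hpI⟩
          rw [← hpx]
          exact hpE
        choose y hyE hyI using this
        refine ⟨y, fun i j hij => by_contra fun hne => ?_, hyE⟩
        have : y j ∈ Ioo ((q i).1 : ℝ) ((q i).2 : ℝ) ∩ Ioo ((q j).1 : ℝ) ((q j).2 : ℝ) :=
          ⟨hij ▸ hyI i, hyI j⟩
        rw [hq i j hne] at this
        exact this
    rw [this]
    refine AnalyticSet.iUnion fun q => AnalyticSet.iInter fun j => analyticSet_proj ?_
    exact hE.inter (measurable_snd measurableSet_Ioo)

theorem hasDistinct_mono {E F : Set (X × ℝ)} (h : E ⊆ F) {k : ℕ} {x : X} :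
    HasDistinct E k x → HasDistinct F k x := by
  rintro ⟨y, h1, h2⟩; exact ⟨y, h1, fun j => h (h2 j)⟩

/-- Lusin–Novikov for bounded finite sections: a Borel subset of `X × ℝ` all of whose vertical
sections have at most `n` points is a countable union of Borel partial graphs. -/
theorem decomp : ∀ (n : ℕ) (E : Set (X × ℝ)), MeasurableSet E →
    (∀ x, ¬ HasDistinct E (n + 1) x) →
    ∃ 𝒞 : Set (Set (X × ℝ)), 𝒞.Countable ∧
      (∀ G ∈ 𝒞, MeasurableSet G ∧ ∀ x : X, {y : ℝ | (x, y) ∈ G}.Subsingleton) ∧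
      ⋃₀ 𝒞 = E := by
  intro n
  induction n with
  | zero =>
    intro E hE hdeg
    refine ⟨{E}, countable_singleton E, ?_, sUnion_singleton E⟩
    rintro G rfl
    refine ⟨hE, fun x y hy z hz => ?_⟩
    exact absurd ⟨fun _ => y, fun a b _ => Fin.ext (by omega), fun j => hy⟩ (hdeg x)
  | succ n IH =>
    intro E hE hdeg
    -- left and right parts
    set L : ℚ → Set (X × ℝ) := fun q => E ∩ {p | p.2 < (q : ℝ)} with hL
    set R : ℚ → Set (X × ℝ) := fun q => E ∩ {p | (q : ℝ) < p.2} with hR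
    have hLm : ∀ q, MeasurableSet (L q) := fun q =>
      hE.inter (measurable_snd measurableSet_Iio)
    have hRm : ∀ q, MeasurableSet (R q) := fun q =>
      hE.inter (measurable_snd measurableSet_Ioi)
    -- a point with a witness on one side has at most n on the other side
    have key : ∀ (q : ℚ) (A B : Set (X × ℝ)), A = L q → B = R q →
        Disjoint (Prod.fst '' B) {x | HasDistinct A (n + 1) x} := by
      rintro q A B rfl rfl
      rw [disjoint_left]
      rintro x ⟨p, hpB, hpx⟩ ⟨y, hyinj, hyA⟩
      refine hdeg x ⟨Fin.cons p.2 y, ?_, ?_⟩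
      · rw [Fin.cons_injective_iff]
        refine ⟨?_, hyinj⟩
        rintro ⟨j, hj⟩
        have h1 : y j < (q : ℝ) := (hyA j).2
        have h2 : (q : ℝ) < p.2 := hpB.2
        rw [hj] at h1; linarith
      · intro j
        refine Fin.cases ?_ ?_ j
        · simpa [← hpx] using hpB.1
        · intro i; simpa using (hyA i).1
    have keyR : ∀ (q : ℚ),
        Disjoint (Prod.fst '' (L q)) {x | HasDistinct (R q) (n + 1) x} := by
      intro q
      rw [disjoint_left]
      rintro x ⟨p, hpB, hpx⟩ ⟨y, hyinj, hyA⟩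
      refine hdeg x ⟨Fin.cons p.2 y, ?_, ?_⟩
      · rw [Fin.cons_injective_iff]
        refine ⟨?_, hyinj⟩
        rintro ⟨j, hj⟩
        have h1 : (q : ℝ) < y j := (hyA j).2
        have h2 : p.2 < (q : ℝ) := hpB.2
        rw [hj] at h1; linarith
      · intro j
        refine Fin.cases ?_ ?_ j
        · simpa [← hpx] using hpB.1
        · intro i; simpa using (hyA i).1
    -- Borel separation
    have sepL : ∀ q : ℚ, ∃ C : Set X, Prod.fst '' (R q) ⊆ C ∧
        Disjoint {x | HasDistinct (L q) (n + 1) x} C ∧ MeasurableSet C := fun q =>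
      (analyticSet_proj (hRm q)).measurablySeparable
        (analyticSet_hasDistinct _ (hLm q) (n + 1)) (key q _ _ rfl rfl)
    have sepR : ∀ q : ℚ, ∃ C : Set X, Prod.fst '' (L q) ⊆ C ∧
        Disjoint {x | HasDistinct (R q) (n + 1) x} C ∧ MeasurableSet C := fun q =>
      (analyticSet_proj (hLm q)).measurablySeparable
        (analyticSet_hasDistinct _ (hRm q) (n + 1)) (keyR q)
    choose CL hCL1 hCL2 hCL3 using sepL
    choose CR hCR1 hCR2 hCR3 using sepR
    set EL : ℚ → Set (X × ℝ) := fun q => L q ∩ (Prod.fst ⁻¹' CL q) with hEL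
    set ER : ℚ → Set (X × ℝ) := fun q => R q ∩ (Prod.fst ⁻¹' CR q) with hER
    have hELm : ∀ q, MeasurableSet (EL q) := fun q =>
      (hLm q).inter (measurable_fst (hCL3 q))
    have hERm : ∀ q, MeasurableSet (ER q) := fun q =>
      (hRm q).inter (measurable_fst (hCR3 q))
    have hELdeg : ∀ q x, ¬ HasDistinct (EL q) (n + 1) x := by
      rintro q x ⟨y, hyinj, hyE⟩
      have hxC : x ∈ CL q := (hyE 0).2
      have : HasDistinct (L q) (n + 1) x := ⟨y, hyinj, fun j => (hyE j).1⟩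
      exact (disjoint_left.mp (hCL2 q)) this hxC
    have hERdeg : ∀ q x, ¬ HasDistinct (ER q) (n + 1) x := by
      rintro q x ⟨y, hyinj, hyE⟩
      have hxC : x ∈ CR q := (hyE 0).2
      have : HasDistinct (R q) (n + 1) x := ⟨y, hyinj, fun j => (hyE j).1⟩
      exact (disjoint_left.mp (hCR2 q)) this hxC
    -- apply IH
    have IHL := fun q => IH (EL q) (hELm q) (hELdeg q)
    have IHR := fun q => IH (ER q) (hERm q) (hERdeg q)
    choose 𝒞L h𝒞L1 h𝒞L2 h𝒞L3 using IHL
    choose 𝒞R h𝒞R1 h𝒞R2 h𝒞R3 using IHR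
    set V : Set (X × ℝ) := ⋃ q : ℚ, (EL q ∪ ER q) with hV
    have hVsub : V ⊆ E := by
      rintro p hp
      simp only [hV, mem_iUnion, mem_union] at hp
      obtain ⟨q, hq | hq⟩ := hp
      · exact hq.1.1
      · exact hq.1.1
    set W : Set (X × ℝ) := E \ V with hW
    have hWm : MeasurableSet W :=
      hE.diff (MeasurableSet.iUnion fun q => (hELm q).union (hERm q))
    have hWsub : ∀ x : X, {y : ℝ | (x, y) ∈ W}.Subsingleton := by
      intro x y hy z hz
      by_contra hne
      -- wlog pick the smaller one
      have main : ∀ y z : ℝ, (x, y) ∈ W → (x, z) ∈ E → y < z → False := by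
        intro y z hyW hzE hlt
        obtain ⟨q, hq1, hq2⟩ := exists_rat_btwn hlt
        have hxD : x ∈ CL q := hCL1 q ⟨(x, z), ⟨hzE, hq2⟩, rfl⟩
        have : (x, y) ∈ EL q := ⟨⟨hyW.1, hq1⟩, hxD⟩
        exact hyW.2 (mem_iUnion.mpr ⟨q, Or.inl this⟩)
      have mainR : ∀ y z : ℝ, (x, y) ∈ W → (x, z) ∈ E → z < y → False := by
        intro y z hyW hzE hlt
        obtain ⟨q, hq1, hq2⟩ := exists_rat_btwn hlt
        have hxD : x ∈ CR q := hCR1 q ⟨(x, z), ⟨hzE, hq1⟩, rfl⟩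
        have : (x, y) ∈ ER q := ⟨⟨hyW.1, hq2⟩, hxD⟩
        exact hyW.2 (mem_iUnion.mpr ⟨q, Or.inr this⟩)
      rcases lt_or_gt_of_ne hne with h | h
      · exact main y z hy hz.1 h
      · exact mainR y z hy hz.1 h
    refine ⟨insert W (⋃ q : ℚ, (𝒞L q ∪ 𝒞R q)), ?_, ?_, ?_⟩
    · exact (Set.countable_iUnion fun q => (h𝒞L1 q).union (h𝒞R1 q)).insert W
    · rintro G hG
      rcases hG with rfl | hG
      · exact ⟨hWm, hWsub⟩
      · simp only [mem_iUnion, mem_union] at hG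
        obtain ⟨q, hq | hq⟩ := hG
        · exact h𝒞L2 q G hq
        · exact h𝒞R2 q G hq
    · rw [sUnion_insert]
      have : ⋃₀ (⋃ q : ℚ, (𝒞L q ∪ 𝒞R q)) = V := by
        rw [hV]
        ext p
        simp only [mem_sUnion, mem_iUnion, mem_union]
        constructor
        · rintro ⟨t, ht, hpt⟩
          rcases ht with ⟨q, hq | hq⟩
          · exact ⟨q, Or.inl ((h𝒞L3 q) ▸ ⟨t, hq, hpt⟩)⟩
          · exact ⟨q, Or.inr ((h𝒞R3 q) ▸ ⟨t, hq, hpt⟩)⟩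
        · rintro ⟨q, hq | hq⟩
          · rw [← h𝒞L3 q] at hq
            obtain ⟨t, ht, hpt⟩ := hq
            exact ⟨t, ⟨q, Or.inl ht⟩, hpt⟩
          · rw [← h𝒞R3 q] at hq
            obtain ⟨t, ht, hpt⟩ := hq
            exact ⟨t, ⟨q, Or.inr ht⟩, hpt⟩
      rw [this, hW]
      rw [diff_union_of_subset hVsub]

/-- Decomposition of a Borel set in `X × X` with sections of size at most `d` into countably
many disjoint Borel partial graphs. -/
theorem decompX (d : ℕ) (E : Set (X × X)) (hE : MeasurableSet E)
    (hfin : ∀ x, {y : X | (x, y) ∈ E}.Finite)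
    (hcard : ∀ x, {y : X | (x, y) ∈ E}.ncard ≤ d) :
    ∃ G : ℕ → Set (X × X), (∀ i, MeasurableSet (G i)) ∧
      (∀ i (x : X), {y : X | (x, y) ∈ G i}.Subsingleton) ∧
      Pairwise (Function.onFun Disjoint G) ∧ (⋃ i, G i) = E := by
  obtain ⟨j, hj⟩ := exists_measurableEmbedding_real X
  have hemb : MeasurableEmbedding (fun p : X × X => (p.1, j p.2)) :=
    MeasurableEmbedding.id.prodMap hj
  set EE : Set (X × ℝ) := (fun p : X × X => (p.1, j p.2)) '' E with hEEdef
  have hEE : MeasurableSet EE := hemb.measurableSet_image' hE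
  have hsec : ∀ x : X, {t : ℝ | (x, t) ∈ EE} = j '' {y : X | (x, y) ∈ E} := by
    intro x
    ext t
    constructor
    · rintro ⟨⟨a, b⟩, hab, heq⟩
      have h1 : a = x := (Prod.mk.injEq _ _ _ _ ▸ heq).1
      have h2 : j b = t := (Prod.mk.injEq _ _ _ _ ▸ heq).2
      exact ⟨b, h1 ▸ hab, h2⟩
    · rintro ⟨b, hb, rfl⟩
      exact ⟨(x, b), hb, rfl⟩
  have hdeg : ∀ x, ¬ HasDistinct EE (d + 1) x := by
    rintro x ⟨t, htinj, htE⟩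
    have : ∀ i, ∃ y : X, (x, y) ∈ E ∧ j y = t i := by
      intro i
      have hmem : t i ∈ {s : ℝ | (x, s) ∈ EE} := htE i
      rw [hsec x] at hmem
      obtain ⟨y, hy, hyt⟩ := hmem
      exact ⟨y, hy, hyt⟩
    choose y hyE hyt using this
    have hyinj : Function.Injective y := by
      intro a b hab
      exact htinj (by rw [← hyt a, ← hyt b, hab])
    classical
    have hsub : ↑(Finset.image y Finset.univ) ⊆ {y : X | (x, y) ∈ E} := by
      intro z hz
      simp only [Finset.coe_image, Finset.coe_univ, image_univ, mem_range] at hz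
      obtain ⟨i, rfl⟩ := hz
      exact hyE i
    have hcard' : (Finset.image y Finset.univ).card = d + 1 := by
      rw [Finset.card_image_of_injective _ hyinj, Finset.card_univ, Fintype.card_fin]
    have := Set.ncard_le_ncard hsub (hfin x)
    rw [Set.ncard_coe_finset, hcard'] at this
    exact absurd (le_trans this (hcard x)) (by omega)
  obtain ⟨𝒞, h𝒞c, h𝒞mem, h𝒞u⟩ := decomp d EE hEE hdeg
  have h𝒞c' : (insert (∅ : Set (X × ℝ)) 𝒞).Countable := h𝒞c.insert _
  obtain ⟨F, hF⟩ := h𝒞c'.exists_eq_range ⟨∅, mem_insert _ _⟩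
  have hFmem : ∀ i, MeasurableSet (F i) ∧ ∀ x : X, {y : ℝ | (x, y) ∈ F i}.Subsingleton := by
    intro i
    have : F i ∈ insert (∅ : Set (X × ℝ)) 𝒞 := hF ▸ mem_range_self i
    rcases this with h | h
    · rw [h]; exact ⟨MeasurableSet.empty, fun x => by simp [Set.Subsingleton]⟩
    · exact h𝒞mem _ h
  have hFu : (⋃ i, F i) = EE := by
    rw [← h𝒞u]
    ext p
    simp only [mem_iUnion, mem_sUnion]
    constructor
    · rintro ⟨i, hi⟩
      have : F i ∈ insert (∅ : Set (X × ℝ)) 𝒞 := hF ▸ mem_range_self i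
      rcases this with h | h
      · rw [h] at hi; exact absurd hi (notMem_empty p)
      · exact ⟨F i, h, hi⟩
    · rintro ⟨t, ht, hpt⟩
      have : t ∈ range F := hF ▸ mem_insert_of_mem _ ht
      obtain ⟨i, rfl⟩ := this
      exact ⟨i, hpt⟩
  set F' : ℕ → Set (X × ℝ) := disjointed F with hF'
  have hF'm : ∀ i, MeasurableSet (F' i) := MeasurableSet.disjointed fun i => (hFmem i).1
  have hF'sub : ∀ i, F' i ⊆ F i := fun i => disjointed_subset F i
  have hF'disj : Pairwise (Function.onFun Disjoint F') := disjoint_disjointed F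
  have hF'u : (⋃ i, F' i) = EE := by rw [iUnion_disjointed, hFu]
  refine ⟨fun i => (fun p : X × X => (p.1, j p.2)) ⁻¹' (F' i) ∩ E, ?_, ?_, ?_, ?_⟩
  · exact fun i => (hemb.measurable (hF'm i)).inter hE
  · intro i x y hy z hz
    have h1 : (x, j y) ∈ F' i := hy.1
    have h2 : (x, j z) ∈ F' i := hz.1
    exact hj.injective ((hFmem i).2 x (hF'sub i h1) (hF'sub i h2))
  · intro a b hab
    refine Set.disjoint_left.mpr fun p hp hp' => ?_
    exact Set.disjoint_left.mp (hF'disj hab) hp.1 hp'.1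
  · ext p
    simp only [mem_iUnion, mem_inter_iff, mem_preimage]
    constructor
    · rintro ⟨i, _, hpE⟩; exact hpE
    · intro hpE
      have : (p.1, j p.2) ∈ EE := ⟨p, hpE, rfl⟩
      rw [← hF'u] at this
      obtain ⟨i, hi⟩ := mem_iUnion.mp this
      exact ⟨i, hi, hpE⟩

/-- Measurability of section counting for Borel sets with uniformly finite sections. -/
theorem sectionCount_measurable (d : ℕ) (E : Set (X × X)) (hE : MeasurableSet E)
    (hfin : ∀ x, {y : X | (x, y) ∈ E}.Finite)
    (hcard : ∀ x, {y : X | (x, y) ∈ E}.ncard ≤ d)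
    (B : Set X) (hB : MeasurableSet B) :
    Measurable (fun x => (({y : X | (x, y) ∈ E} ∩ B).ncard : ℝ≥0∞)) := by
  obtain ⟨G, hGm, hGsub, hGdisj, hGu⟩ := decompX d E hE hfin hcard
  set T : ℕ → Set X := fun i => Prod.fst '' (G i ∩ {p : X × X | p.2 ∈ B}) with hT
  have hTm : ∀ i, MeasurableSet (T i) := by
    intro i
    refine MeasurableSet.image_of_measurable_injOn ((hGm i).inter (measurable_snd hB))
      measurable_fst ?_
    rintro ⟨x, y⟩ ⟨hy, _⟩ ⟨x', z⟩ ⟨hz, _⟩ (h : x = x')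
    subst h
    exact Prod.ext rfl (hGsub i x hy hz)
  have hkey : ∀ x, (({y : X | (x, y) ∈ E} ∩ B).ncard : ℝ≥0∞) =
      ∑' i, (T i).indicator (fun _ => (1 : ℝ≥0∞)) x := by
    intro x
    have hsecm : ∀ i, MeasurableSet {y : X | (x, y) ∈ G i} :=
      fun i => measurable_prodMk_left (hGm i)
    have hunion : {y : X | (x, y) ∈ E} ∩ B = ⋃ i, ({y : X | (x, y) ∈ G i} ∩ B) := by
      rw [← hGu]; ext y; simp only [mem_inter_iff, mem_iUnion, mem_setOf_eq]; tauto
    have hdisj : Pairwise (Function.onFun Disjoint (fun i => {y : X | (x, y) ∈ G i} ∩ B)) := by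
      intro a b hab
      refine Set.disjoint_left.mpr fun y hy hy' => ?_
      exact Set.disjoint_left.mp (hGdisj hab) hy.1 hy'.1
    have hc1 : (Measure.count ({y : X | (x, y) ∈ E} ∩ B) : ℝ≥0∞) =
        (({y : X | (x, y) ∈ E} ∩ B).ncard : ℝ≥0∞) := by
      rw [Measure.count_apply_finite _ ((hfin x).inter_of_left B),
        Set.ncard_eq_toFinset_card _ ((hfin x).inter_of_left B)]
    rw [← hc1, hunion, measure_iUnion hdisj (fun i => (hsecm i).inter hB)]
    congr 1
    ext i
    rcases Set.eq_empty_or_nonempty ({y : X | (x, y) ∈ G i} ∩ B) with h | h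
    · rw [h]
      simp only [measure_empty]
      have : x ∉ T i := by
        intro hxT
        obtain ⟨p, hp, hpx⟩ := hxT
        have : p.2 ∈ {y : X | (x, y) ∈ G i} ∩ B := by
          refine ⟨?_, hp.2⟩
          show (x, p.2) ∈ G i
          rw [← hpx]
          exact hp.1
        rw [eq_empty_iff_forall_notMem] at h
        exact h p.2 this
      rw [Set.indicator_of_notMem this]
    · obtain ⟨y, hy⟩ := h
      have hsing : {y' : X | (x, y') ∈ G i} ∩ B = {y} := by
        apply Set.eq_singleton_iff_unique_mem.mpr
        exact ⟨hy, fun z hz => hGsub i x hz.1 hy.1⟩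
      rw [hsing, Measure.count_singleton]
      have : x ∈ T i := ⟨(x, y), ⟨hy.1, hy.2⟩, rfl⟩
      rw [Set.indicator_of_mem this]
  have : (fun x => (({y : X | (x, y) ∈ E} ∩ B).ncard : ℝ≥0∞)) =
      fun x => ∑' i, (T i).indicator (fun _ => (1 : ℝ≥0∞)) x := funext hkey
  rw [this]
  exact Measurable.ennreal_tsum fun i => (measurable_one.indicator (hTm i))

variable {d : ℕ} (𝒢 : Graphing d)

/-- The neighbourhood Finset of a point. -/
def nbhd (x : 𝒢.X) : Finset 𝒢.X := (𝒢.nbr_finite x).toFinset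

lemma mem_nbhd {x y : 𝒢.X} : y ∈ nbhd 𝒢 x ↔ 𝒢.graph.Adj x y := by
  simp [nbhd, Set.Finite.mem_toFinset, SimpleGraph.mem_neighborSet]

lemma card_nbhd (x : 𝒢.X) : (nbhd 𝒢 x).card = 𝒢.deg x := by
  rw [Graphing.deg, Set.ncard_eq_toFinset_card _ (𝒢.nbr_finite x)]; rfl

lemma countFun_measurable {B : Set 𝒢.X} (hB : MeasurableSet B) :
    Measurable (fun x => ((𝒢.graph.neighborSet x ∩ B).ncard : ℝ≥0∞)) := by
  have := sectionCount_measurable d {p : 𝒢.X × 𝒢.X | 𝒢.graph.Adj p.1 p.2} 𝒢.edge_borel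
    (fun x => 𝒢.nbr_finite x) (fun x => 𝒢.deg_le x) B hB
  exact this

lemma deg_measurable : Measurable (fun x => (𝒢.deg x : ℝ≥0∞)) := by
  have := countFun_measurable 𝒢 MeasurableSet.univ
  simpa [Set.inter_univ, Graphing.deg] using this

/-- The nonnegative adjacency operator. -/
def T (g : 𝒢.X → ℝ≥0∞) (x : 𝒢.X) : ℝ≥0∞ := ∑ v ∈ nbhd 𝒢 x, g v

lemma T_indicator (B : Set 𝒢.X) (c : ℝ≥0∞) (x : 𝒢.X) :
    T 𝒢 (B.indicator fun _ => c) x = c * ((𝒢.graph.neighborSet x ∩ B).ncard : ℝ≥0∞) := by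
  classical
  rw [T]
  rw [Finset.sum_indicator_eq_sum_filter]
  rw [Finset.sum_const]
  have hset : 𝒢.graph.neighborSet x ∩ B = ↑((nbhd 𝒢 x).filter (fun v => v ∈ B)) := by
    ext y
    simp [mem_nbhd, SimpleGraph.mem_neighborSet]
  rw [hset, Set.ncard_coe_finset, mul_comm, nsmul_eq_mul]

lemma lintegral_count (B : Set 𝒢.X) (hB : MeasurableSet B) :
    ∫⁻ x, ((𝒢.graph.neighborSet x ∩ B).ncard : ℝ≥0∞) ∂𝒢.ν
      = ∫⁻ x in B, (𝒢.deg x : ℝ≥0∞) ∂𝒢.ν := by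
  have := 𝒢.mpres Set.univ B MeasurableSet.univ hB
  rw [setLIntegral_univ] at this
  rw [this]
  apply setLIntegral_congr_fun hB
  intro x _
  simp [Graphing.deg]

/-- Mass transport principle. -/
theorem MTP {g : 𝒢.X → ℝ≥0∞} (hg : Measurable g) :
    Measurable (T 𝒢 g) ∧ ∫⁻ x, T 𝒢 g x ∂𝒢.ν = ∫⁻ x, (𝒢.deg x : ℝ≥0∞) * g x ∂𝒢.ν := by
  have hsimple : ∀ φ : SimpleFunc 𝒢.X ℝ≥0∞, Measurable (T 𝒢 ⇑φ) ∧
      ∫⁻ x, T 𝒢 ⇑φ x ∂𝒢.ν = ∫⁻ x, (𝒢.deg x : ℝ≥0∞) * φ x ∂𝒢.ν := by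
    intro φ
    induction φ using SimpleFunc.induction with
    | const c hs =>
      rename_i s
      have hcoe : ⇑(SimpleFunc.piecewise s hs (SimpleFunc.const 𝒢.X c) (SimpleFunc.const 𝒢.X 0))
          = s.indicator fun _ => c := by
        ext x
        simp [SimpleFunc.coe_piecewise, Set.piecewise, Set.indicator]
      rw [hcoe]
      constructor
      · have : T 𝒢 (s.indicator fun _ => c)
            = fun x => c * ((𝒢.graph.neighborSet x ∩ s).ncard : ℝ≥0∞) :=
          funext fun x => T_indicator 𝒢 s c x
        rw [this]
        exact (countFun_measurable 𝒢 hs).const_mul c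
      · have h1 : ∫⁻ x, T 𝒢 (s.indicator fun _ => c) x ∂𝒢.ν
            = c * ∫⁻ x, ((𝒢.graph.neighborSet x ∩ s).ncard : ℝ≥0∞) ∂𝒢.ν := by
          rw [← lintegral_const_mul c (countFun_measurable 𝒢 hs)]
          congr 1
          ext x
          exact T_indicator 𝒢 s c x
        rw [h1, lintegral_count 𝒢 s hs]
        have h2 : ∫⁻ x, (𝒢.deg x : ℝ≥0∞) * (s.indicator fun _ => c) x ∂𝒢.ν
            = ∫⁻ x in s, (𝒢.deg x : ℝ≥0∞) * c ∂𝒢.ν := by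
          rw [← lintegral_indicator hs]
          congr 1
          ext x
          by_cases hx : x ∈ s <;> simp [Set.indicator, hx]
        rw [h2, lintegral_mul_const c (deg_measurable 𝒢), mul_comm]
    | @add φ ψ hfg hφ hψ =>
      have hTadd : T 𝒢 ⇑(φ + ψ) = fun x => T 𝒢 ⇑φ x + T 𝒢 ⇑ψ x := by
        ext x
        simp only [T, SimpleFunc.coe_add, Pi.add_apply]
        rw [Finset.sum_add_distrib]
      constructor
      · rw [hTadd];  exact hφ.1.add hψ.1
      · rw [hTadd, lintegral_add_left hφ.1, hφ.2, hψ.2, ← lintegral_add_left]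
        · congr 1; ext x; simp [SimpleFunc.coe_add, mul_add]
        · exact (deg_measurable 𝒢).mul φ.measurable
  -- general case via eapprox
  have hmono : ∀ x, Monotone fun n => T 𝒢 ⇑(SimpleFunc.eapprox g n) x := by
    intro x n m hnm
    exact Finset.sum_le_sum fun v _ => SimpleFunc.monotone_eapprox g hnm v
  have hTsup : T 𝒢 g = fun x => ⨆ n, T 𝒢 ⇑(SimpleFunc.eapprox g n) x := by
    ext x
    have hm : ∀ v : 𝒢.X, Monotone (fun n => (SimpleFunc.eapprox g n) v) :=
      fun v n m h => SimpleFunc.monotone_eapprox g h v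
    have h1 : (∑ v ∈ nbhd 𝒢 x, g v) = ∑ v ∈ nbhd 𝒢 x, ⨆ n, (SimpleFunc.eapprox g n) v :=
      Finset.sum_congr rfl fun v _ => (SimpleFunc.iSup_eapprox_apply hg v).symm
    show (∑ v ∈ nbhd 𝒢 x, g v) = _
    rw [h1, ENNReal.finsetSum_iSup_of_monotone hm]
    rfl
  constructor
  · rw [hTsup]; exact Measurable.iSup fun n => (hsimple _).1
  · rw [hTsup, lintegral_iSup (fun n => (hsimple _).1)
      (fun n m hnm => fun x => hmono x hnm)]
    have : ∀ n, ∫⁻ x, T 𝒢 ⇑(SimpleFunc.eapprox g n) x ∂𝒢.ν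
        = ∫⁻ x, (𝒢.deg x : ℝ≥0∞) * (SimpleFunc.eapprox g n) x ∂𝒢.ν := fun n => (hsimple _).2
    simp_rw [this]
    rw [← lintegral_iSup (fun n => (deg_measurable 𝒢).fun_mul (SimpleFunc.eapprox g n).measurable)
      (fun n m hnm x => mul_le_mul_right (SimpleFunc.monotone_eapprox g hnm x) _)]
    congr 1
    ext x
    rw [← ENNReal.mul_iSup, SimpleFunc.iSup_eapprox_apply hg]


variable {d : ℕ} (𝒢 : Graphing d)

/-- Saturation of a null set. -/
theorem exists_saturated_null {S : Set 𝒢.X} (hSm : MeasurableSet S) (hS0 : 𝒢.ν S = 0) :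
    ∃ N : Set 𝒢.X, MeasurableSet N ∧ 𝒢.ν N = 0 ∧ S ⊆ N ∧
      ∀ x y, 𝒢.graph.Adj x y → y ∈ N → x ∈ N := by
  -- one-step neighbourhood of a null measurable set is null
  have step : ∀ M : Set 𝒢.X, MeasurableSet M → 𝒢.ν M = 0 →
      MeasurableSet {x | (0 : ℝ≥0∞) < ((𝒢.graph.neighborSet x ∩ M).ncard : ℝ≥0∞)} ∧
      𝒢.ν {x | (0 : ℝ≥0∞) < ((𝒢.graph.neighborSet x ∩ M).ncard : ℝ≥0∞)} = 0 := by
    intro M hMm hM0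
    have hmeas := countFun_measurable 𝒢 hMm
    have hms : MeasurableSet {x | (0:ℝ≥0∞) < ((𝒢.graph.neighborSet x ∩ M).ncard : ℝ≥0∞)} :=
      measurableSet_lt measurable_const hmeas
    refine ⟨hms, ?_⟩
    have hint : ∫⁻ x, ((𝒢.graph.neighborSet x ∩ M).ncard : ℝ≥0∞) ∂𝒢.ν = 0 := by
      rw [lintegral_count 𝒢 M hMm]
      have : ∫⁻ x in M, (𝒢.deg x : ℝ≥0∞) ∂𝒢.ν ≤ ∫⁻ _ in M, (d : ℝ≥0∞) ∂𝒢.ν := by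
        apply setLIntegral_mono measurable_const
        intro x _
        exact_mod_cast Nat.cast_le.mpr (𝒢.deg_le x)
      rw [setLIntegral_const, hM0, mul_zero] at this
      exact le_antisymm this zero_le
    have := (lintegral_eq_zero_iff hmeas).mp hint
    have : 𝒢.ν {x | ¬ ((𝒢.graph.neighborSet x ∩ M).ncard : ℝ≥0∞) = 0} = 0 := by
      rw [← ae_iff]; exact this
    refine measure_mono_null ?_ this
    intro x hx
    simp only [mem_setOf_eq] at *
    exact fun h => absurd (h ▸ hx) (lt_irrefl 0)
  -- iterate
  let Nseq : ℕ → Set 𝒢.X := fun k => Nat.rec S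
    (fun _ Nk => Nk ∪ {x | (0:ℝ≥0∞) < ((𝒢.graph.neighborSet x ∩ Nk).ncard : ℝ≥0∞)}) k
  have hNseq : ∀ k, MeasurableSet (Nseq k) ∧ 𝒢.ν (Nseq k) = 0 := by
    intro k
    induction k with
    | zero => exact ⟨hSm, hS0⟩
    | succ k ih =>
      obtain ⟨h1, h2⟩ := step (Nseq k) ih.1 ih.2
      exact ⟨ih.1.union h1, measure_union_null ih.2 h2⟩
  refine ⟨⋃ k, Nseq k, MeasurableSet.iUnion fun k => (hNseq k).1,
    measure_iUnion_null fun k => (hNseq k).2, subset_iUnion Nseq 0, ?_⟩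
  intro x y hxy hy
  obtain ⟨k, hk⟩ := mem_iUnion.mp hy
  refine mem_iUnion.mpr ⟨k + 1, Or.inr ?_⟩
  have hfin : (𝒢.graph.neighborSet x ∩ Nseq k).Finite := (𝒢.nbr_finite x).inter_of_left _
  have hne : (𝒢.graph.neighborSet x ∩ Nseq k).Nonempty := ⟨y, hxy, hk⟩
  show (0:ℝ≥0∞) < ((𝒢.graph.neighborSet x ∩ Nseq k).ncard : ℝ≥0∞)
  exact_mod_cast Nat.cast_pos.mpr ((Set.ncard_pos hfin).mpr hne)

/-- Conull invariant refinement of an a.e. property. -/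
theorem exists_invariant_conull {P : 𝒢.X → Prop} (h : ∀ᵐ x ∂𝒢.ν, P x) :
    ∃ G : Set 𝒢.X, MeasurableSet G ∧ 𝒢.ν Gᶜ = 0 ∧ (∀ x ∈ G, P x) ∧
      ∀ x ∈ G, ∀ y, 𝒢.graph.Adj x y → y ∈ G := by
  obtain ⟨S, hSsub, hSm, hS0⟩ := exists_measurable_superset_of_null (ae_iff.mp h)
  obtain ⟨N, hNm, hN0, hSN, hNcl⟩ := exists_saturated_null 𝒢 hSm hS0
  refine ⟨Nᶜ, hNm.compl, by rwa [compl_compl], ?_, ?_⟩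
  · intro x hx
    by_contra hPx
    exact hx (hSN (hSsub hPx))
  · intro x hx y hxy hyN
    exact hx (hNcl x y hxy hyN)


section Alg

/-- Cauchy-Schwarz step. -/
theorem cs_step {X : Type*} (S : Finset X) (f : X → ℂ) (c : ℂ)
    (havg : (S.card : ℂ) * c = ∑ v ∈ S, f v) :
    (S.card : ℝ) * ‖c‖ ^ 2 ≤ ∑ v ∈ S, ‖f v‖ ^ 2 := by
  rcases Nat.eq_zero_or_pos S.card with h0 | hpos
  · rw [h0]
    simp only [Nat.cast_zero, zero_mul]
    exact Finset.sum_nonneg fun v _ => sq_nonneg _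
  · have h1 : ‖(S.card : ℂ) * c‖ = (S.card : ℝ) * ‖c‖ := by
      rw [norm_mul]
      norm_num
    have h2 : ‖∑ v ∈ S, f v‖ ≤ ∑ v ∈ S, ‖f v‖ := norm_sum_le S f
    have h3 : (∑ v ∈ S, ‖f v‖) ^ 2 ≤ (S.card : ℝ) * ∑ v ∈ S, ‖f v‖ ^ 2 := by
      exact_mod_cast sq_sum_le_card_mul_sum_sq (s := S) (f := fun v => ‖f v‖)
    have h4 : ((S.card : ℝ) * ‖c‖) ^ 2 ≤ (S.card : ℝ) * ∑ v ∈ S, ‖f v‖ ^ 2 := by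
      calc ((S.card : ℝ) * ‖c‖) ^ 2 = ‖(S.card : ℂ) * c‖ ^ 2 := by rw [h1]
        _ = ‖∑ v ∈ S, f v‖ ^ 2 := by rw [havg]
        _ ≤ (∑ v ∈ S, ‖f v‖) ^ 2 := by
            apply pow_le_pow_left₀ (norm_nonneg _) h2
        _ ≤ (S.card : ℝ) * ∑ v ∈ S, ‖f v‖ ^ 2 := h3
    have hn : (0 : ℝ) < (S.card : ℝ) := by exact_mod_cast hpos
    nlinarith [sq_nonneg ‖c‖, h4]

/-- Equality case: all values agree with the average. -/
theorem eq_step {X : Type*} (S : Finset X) (f : X → ℂ) (c : ℂ)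
    (havg : (S.card : ℂ) * c = ∑ v ∈ S, f v)
    (heq : ∑ v ∈ S, ‖f v‖ ^ 2 = (S.card : ℝ) * ‖c‖ ^ 2) :
    ∀ v ∈ S, f v = c := by
  have hnormSq : ∀ z : ℂ, Complex.normSq z = ‖z‖ ^ 2 := fun z => by
    rw [Complex.sq_norm]
  have hkey : ∑ v ∈ S, Complex.normSq (f v - c) = 0 := by
    have hA : ∑ v ∈ S, (Complex.normSq (f v - c) + 2 * (f v * (starRingEnd ℂ) c).re)
        = ∑ v ∈ S, (Complex.normSq (f v) + Complex.normSq c) := by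
      refine Finset.sum_congr rfl fun v _ => ?_
      rw [Complex.normSq_sub]
      ring
    rw [Finset.sum_add_distrib, Finset.sum_add_distrib, Finset.sum_const, nsmul_eq_mul] at hA
    have hre : ∑ v ∈ S, 2 * (f v * (starRingEnd ℂ) c).re
        = 2 * (((S.card : ℂ) * c) * (starRingEnd ℂ) c).re := by
      rw [← Finset.mul_sum, ← Complex.re_sum, ← Finset.sum_mul, ← havg]
    have hcc : (((S.card : ℂ) * c) * (starRingEnd ℂ) c).re = (S.card : ℝ) * Complex.normSq c := by
      rw [mul_assoc, Complex.mul_conj]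
      simp
    rw [hre, hcc] at hA
    have hsumnorm : ∑ v ∈ S, Complex.normSq (f v) = (S.card : ℝ) * Complex.normSq c := by
      rw [Finset.sum_congr rfl fun v _ => hnormSq (f v), heq, hnormSq c]
    rw [hsumnorm] at hA
    linarith
  intro v hv
  have hterm : Complex.normSq (f v - c) = 0 := by
    have hnonneg : ∀ w ∈ S, 0 ≤ Complex.normSq (f w - c) := fun w _ => Complex.normSq_nonneg _
    exact (Finset.sum_eq_zero_iff_of_nonneg hnonneg).mp hkey v hv
  exact sub_eq_zero.mp (Complex.normSq_eq_zero.mp hterm)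

/-- Dichotomy level-set lemma. -/
theorem levelset_const {X : Type*} [MeasurableSpace X] (ν : Measure X) [IsProbabilityMeasure ν]
    (u : X → ℝ) (hu : Measurable u)
    (hlev : ∀ t : ℝ, ν {x | t < u x} = 0 ∨ ν {x | t < u x} = 1) :
    ∃ a : ℝ, ∀ᵐ x ∂ν, u x = a := by
  have hmono : ∀ s t : ℝ, s ≤ t → ν {x | t < u x} ≤ ν {x | s < u x} :=
    fun s t hst => measure_mono fun x hx => lt_of_le_of_lt hst hx
  -- nonempty
  have h1 : ∃ n : ℕ, ν {x | -(n : ℝ) < u x} = 1 := by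
    by_contra hcon
    push_neg at hcon
    have hall : ∀ n : ℕ, ν {x | -(n : ℝ) < u x} = 0 := fun n =>
      (hlev (-(n:ℝ))).resolve_right (hcon n)
    have : ν (⋃ n : ℕ, {x | -(n : ℝ) < u x}) = 0 := measure_iUnion_null hall
    have huniv : (⋃ n : ℕ, {x | -(n : ℝ) < u x}) = univ := by
      ext x
      simp only [mem_iUnion, mem_setOf_eq, mem_univ, iff_true]
      obtain ⟨n, hn⟩ := exists_nat_gt (-(u x))
      exact ⟨n, by linarith⟩
    rw [huniv, measure_univ] at this
    simp at this
  -- bounded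
  have h2 : ∃ n : ℕ, ν {x | (n : ℝ) < u x} = 0 := by
    by_contra hcon
    push_neg at hcon
    have hall : ∀ n : ℕ, ν {x | (n : ℝ) < u x} = 1 := fun n =>
      (hlev (n:ℝ)).resolve_left (hcon n)
    set sN : ℕ → Set X := fun n => {x | (n : ℝ) < u x} with hsN
    have hanti : Antitone sN := by
      intro n m hnm x hx
      have hc : ((n : ℝ)) ≤ (m : ℝ) := Nat.cast_le.mpr hnm
      exact lt_of_le_of_lt hc hx
    have hsm : ∀ n, NullMeasurableSet (sN n) ν := fun n =>
      (hu measurableSet_Ioi : MeasurableSet (sN n)).nullMeasurableSet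
    have hlim := tendsto_measure_iInter_atTop hsm hanti ⟨0, measure_ne_top ν _⟩
    have hempty : (⋂ n : ℕ, sN n) = ∅ := by
      ext x
      simp only [hsN, mem_iInter, mem_setOf_eq, mem_empty_iff_false, iff_false, not_forall,
        not_lt]
      obtain ⟨n, hn⟩ := exists_nat_gt (u x)
      exact ⟨n, le_of_lt hn⟩
    rw [hempty, measure_empty] at hlim
    have hlim' : Filter.Tendsto (fun _ : ℕ => (1 : ℝ≥0∞)) Filter.atTop (nhds 0) := by
      refine hlim.congr fun n => ?_
      show ν (sN n) = 1
      exact hall n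
    have := tendsto_nhds_unique hlim' tendsto_const_nhds
    exact zero_ne_one this
  obtain ⟨n₁, hn₁⟩ := h1
  obtain ⟨n₂, hn₂⟩ := h2
  set T₁ : Set ℝ := {t | ν {x | t < u x} = 1} with hT₁
  have hT₁ne : T₁.Nonempty := ⟨-(n₁ : ℝ), hn₁⟩
  have hT₁bdd : BddAbove T₁ := by
    refine ⟨(n₂ : ℝ), fun t ht => ?_⟩
    by_contra hlt
    push_neg at hlt
    have : ν {x | t < u x} ≤ ν {x | (n₂:ℝ) < u x} := hmono _ _ (le_of_lt hlt)
    rw [ht, hn₂] at this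
    exact (not_le.mpr zero_lt_one) (by exact_mod_cast this)
  set a := sSup T₁ with ha
  have hup : ν {x | a < u x} = 0 := by
    have hsub : {x | a < u x} = ⋃ q : {q : ℚ // a < (q : ℝ)}, {x | (q.1 : ℝ) < u x} := by
      ext x
      simp only [mem_setOf_eq, mem_iUnion]
      constructor
      · intro hx
        obtain ⟨q, hq1, hq2⟩ := exists_rat_btwn hx
        exact ⟨⟨q, hq1⟩, hq2⟩
      · rintro ⟨⟨q, hq⟩, hx⟩
        exact lt_trans hq hx
    rw [hsub]
    apply measure_iUnion_null
    rintro ⟨q, hq⟩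
    refine (hlev _).resolve_right fun h1 => ?_
    have : (q : ℝ) ≤ a := le_csSup hT₁bdd h1
    linarith
  have hdown : ν {x | u x < a} = 0 := by
    have hsub : {x | u x < a} = ⋃ q : {q : ℚ // (q : ℝ) < a}, {x | u x ≤ (q.1 : ℝ)} := by
      ext x
      simp only [mem_setOf_eq, mem_iUnion]
      constructor
      · intro hx
        obtain ⟨q, hq1, hq2⟩ := exists_rat_btwn hx
        exact ⟨⟨q, hq2⟩, le_of_lt hq1⟩
      · rintro ⟨⟨q, hq⟩, hx⟩
        exact lt_of_le_of_lt hx hq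
    rw [hsub]
    apply measure_iUnion_null
    rintro ⟨q, hq⟩
    obtain ⟨t, htT, hqt⟩ := exists_lt_of_lt_csSup hT₁ne hq
    have hcompl : ν {x | t < u x}ᶜ = 0 := by
      rw [measure_compl (show MeasurableSet {x | t < u x} from hu measurableSet_Ioi)
        (measure_ne_top ν _), measure_univ, htT, tsub_self]
    refine measure_mono_null ?_ hcompl
    intro x hx
    simp only [mem_compl_iff, mem_setOf_eq, not_lt] at *
    linarith
  refine ⟨a, ?_⟩
  rw [ae_iff]
  refine measure_mono_null ?_ (measure_union_null hup hdown)
  intro x hx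
  simp only [mem_setOf_eq, mem_union] at *
  rcases lt_or_gt_of_ne hx with h | h
  · exact Or.inr h
  · exact Or.inl h

end Alg

end LapErg

open scoped NNReal

/-- The multiplicity of the eigenvalue `0` of the Laplace operator
`L = D - 𝒢` on `L²(X,ν)` is `1` (its kernel consists exactly of the constants) if and
only if the graphing `𝒢` is ergodic. -/
theorem lap_kernel_constants_iff_ergodic (d : ℕ) (𝒢 : Graphing d) :
    (∀ f : 𝒢.X → ℂ, MemLp f 2 𝒢.ν →
        ((∀ᵐ x ∂𝒢.ν, 𝒢.lap f x = 0) ↔ ∃ a : ℂ, ∀ᵐ x ∂𝒢.ν, f x = a))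
      ↔ 𝒢.IsErgodic := by
  have adjOp_eq : ∀ (f : 𝒢.X → ℂ) (x : 𝒢.X),
      𝒢.adjOp f x = ∑ v ∈ LapErg.nbhd 𝒢 x, f v := fun f x =>
    finsum_mem_eq_finite_toFinset_sum f (𝒢.nbr_finite x)
  have lap_eq : ∀ (f : 𝒢.X → ℂ) (x : 𝒢.X),
      𝒢.lap f x = (𝒢.deg x : ℂ) * f x - ∑ v ∈ LapErg.nbhd 𝒢 x, f v := fun f x => by
    rw [Graphing.lap, adjOp_eq]
  constructor
  · -- kernel = constants ⇒ ergodic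
    intro H
    rintro ⟨A, hAm, h0, h1, hinv⟩
    set f : 𝒢.X → ℂ := A.indicator (fun _ => 1) with hfdef
    have hf : MemLp f 2 𝒢.ν := memLp_indicator_const 2 hAm 1 (Or.inr (measure_ne_top _ _))
    have hlapf : ∀ x, 𝒢.lap f x = 0 := by
      intro x
      rw [lap_eq]
      by_cases hx : x ∈ A
      · have hfx : f x = 1 := Set.indicator_of_mem hx _
        have hnbr : ∀ v ∈ LapErg.nbhd 𝒢 x, f v = 1 := fun v hv =>
          Set.indicator_of_mem (hinv x v hx ((LapErg.mem_nbhd 𝒢).mp hv)) _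
        rw [hfx, Finset.sum_congr rfl hnbr, Finset.sum_const, nsmul_eq_mul, mul_one,
          LapErg.card_nbhd, mul_one, sub_self]
      · have hfx : f x = 0 := Set.indicator_of_notMem hx _
        have hnbr : ∀ v ∈ LapErg.nbhd 𝒢 x, f v = 0 := by
          intro v hv
          refine Set.indicator_of_notMem (fun hv' => hx ?_) _
          exact hinv v x hv' ((LapErg.mem_nbhd 𝒢).mp hv).symm
        rw [hfx, Finset.sum_congr rfl hnbr, Finset.sum_const, smul_zero, mul_zero, sub_zero]
    obtain ⟨a, ha⟩ := (H f hf).mp (Filter.Eventually.of_forall hlapf)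
    have hane : 𝒢.ν {x | ¬ f x = a} = 0 := ae_iff.mp ha
    by_cases ha1 : a = 1
    · have hsub : Aᶜ ⊆ {x | ¬ f x = a} := by
        intro x hx
        simp only [Set.mem_setOf_eq, hfdef, Set.indicator_of_notMem hx, ha1]
        exact zero_ne_one
      have hc : 𝒢.ν Aᶜ = 0 := measure_mono_null hsub hane
      rw [measure_compl hAm (measure_ne_top _ _), measure_univ] at hc
      rw [tsub_eq_zero_iff_le] at hc
      exact absurd (lt_of_lt_of_le h1 hc) (lt_irrefl _)
    · have hsub : A ⊆ {x | ¬ f x = a} := by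
        intro x hx
        simp only [Set.mem_setOf_eq, hfdef, Set.indicator_of_mem hx]
        exact fun h => ha1 h.symm
      exact absurd (measure_mono_null hsub hane) (ne_of_gt h0)
  · -- ergodic ⇒ kernel = constants
    intro herg f hf
    constructor
    · intro hlap
      set g := hf.aestronglyMeasurable.mk f with hgdef
      have hgm : StronglyMeasurable g := hf.aestronglyMeasurable.stronglyMeasurable_mk
      have hfg : f =ᵐ[𝒢.ν] g := hf.aestronglyMeasurable.ae_eq_mk
      have hgmeas : Measurable g := hgm.measurable
      have hg2 : MemLp g 2 𝒢.ν := hf.ae_eq hfg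
      obtain ⟨G₀, hG₀m, hG₀c, hG₀P, hG₀inv⟩ := LapErg.exists_invariant_conull 𝒢 (hlap.and hfg)
      have hG₀ae : ∀ᵐ x ∂𝒢.ν, x ∈ G₀ := by rw [ae_iff]; exact hG₀c
      have hharm : ∀ x ∈ G₀, (𝒢.deg x : ℂ) * g x = ∑ v ∈ LapErg.nbhd 𝒢 x, g v := by
        intro x hx
        have h1 := (hG₀P x hx).1
        have h2 := (hG₀P x hx).2
        rw [lap_eq, sub_eq_zero] at h1
        rw [← h2, h1]
        refine Finset.sum_congr rfl fun v hv => ?_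
        exact (hG₀P v (hG₀inv x hx v ((LapErg.mem_nbhd 𝒢).mp hv))).2
      set q : 𝒢.X → ℝ≥0∞ := fun x => (‖g x‖₊ : ℝ≥0∞) ^ 2 with hqdef
      have hqmeas : Measurable q := hgmeas.enorm.pow_const 2
      have hqint : ∫⁻ x, q x ∂𝒢.ν ≠ ⊤ := by
        have h2' := hg2.2
        rw [eLpNorm_eq_lintegral_rpow_enorm_toReal two_ne_zero ENNReal.ofNat_ne_top] at h2'
        simp only [ENNReal.toReal_ofNat, ENNReal.rpow_two] at h2'
        intro hcon
        rw [show (∫⁻ x, ‖g x‖ₑ ^ 2 ∂𝒢.ν) = ∫⁻ x, q x ∂𝒢.ν from rfl, hcon] at h2'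
        rw [ENNReal.top_rpow_of_pos (by norm_num)] at h2'
        exact absurd h2' (lt_irrefl ⊤)
      obtain ⟨hTmeas, hTint⟩ := LapErg.MTP 𝒢 hqmeas
      have hIfin : ∫⁻ x, (𝒢.deg x : ℝ≥0∞) * q x ∂𝒢.ν ≠ ⊤ := by
        have hb : ∫⁻ x, (𝒢.deg x : ℝ≥0∞) * q x ∂𝒢.ν ≤ (d : ℝ≥0∞) * ∫⁻ x, q x ∂𝒢.ν := by
          rw [← lintegral_const_mul' _ _ (by simp : (d : ℝ≥0∞) ≠ ⊤)]
          refine lintegral_mono fun x => ?_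
          exact mul_le_mul_left ((Nat.cast_le (α := ℝ≥0∞)).mpr (𝒢.deg_le x : 𝒢.deg x ≤ d)) _
        exact ne_top_of_le_ne_top (ENNReal.mul_ne_top (by simp) hqint) hb
      have hTq : ∀ x, LapErg.T 𝒢 q x
          = ((∑ v ∈ LapErg.nbhd 𝒢 x, ‖g v‖₊ ^ 2 : ℝ≥0) : ℝ≥0∞) := by
        intro x
        rw [LapErg.T, ENNReal.coe_finset_sum]
        exact Finset.sum_congr rfl fun v _ => by rw [ENNReal.coe_pow]
      have hdq : ∀ x, (𝒢.deg x : ℝ≥0∞) * q x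
          = (((𝒢.deg x : ℝ≥0) * ‖g x‖₊ ^ 2 : ℝ≥0) : ℝ≥0∞) := by
        intro x
        rw [ENNReal.coe_mul, ENNReal.coe_pow, ENNReal.coe_natCast]
      have hle : ∀ x ∈ G₀, (𝒢.deg x : ℝ≥0∞) * q x ≤ LapErg.T 𝒢 q x := by
        intro x hx
        rw [hTq, hdq, ENNReal.coe_le_coe, ← NNReal.coe_le_coe]
        push_cast
        have hcs := LapErg.cs_step (LapErg.nbhd 𝒢 x) g (g x)
          (by rw [LapErg.card_nbhd]; exact hharm x hx)
        rw [LapErg.card_nbhd] at hcs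
        simpa [coe_nnnorm] using hcs
      set h : 𝒢.X → ℝ≥0∞ := fun x => LapErg.T 𝒢 q x - (𝒢.deg x : ℝ≥0∞) * q x with hhdef
      have hhmeas : Measurable h := hTmeas.sub ((LapErg.deg_measurable 𝒢).mul hqmeas)
      have hsplit : ∫⁻ x, LapErg.T 𝒢 q x ∂𝒢.ν
          = ∫⁻ x, ((𝒢.deg x : ℝ≥0∞) * q x + h x) ∂𝒢.ν := by
        refine lintegral_congr_ae ?_
        filter_upwards [hG₀ae] with x hx
        rw [hhdef]
        exact (add_tsub_cancel_of_le (hle x hx)).symm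
      rw [hTint, lintegral_add_left ((LapErg.deg_measurable 𝒢).fun_mul hqmeas)] at hsplit
      have hh0 : ∫⁻ x, h x ∂𝒢.ν = 0 := by
        exact ((ENNReal.add_right_inj hIfin).mp (by rw [add_zero]; exact hsplit)).symm
      have hhae : ∀ᵐ x ∂𝒢.ν, h x = 0 := (lintegral_eq_zero_iff hhmeas).mp hh0
      obtain ⟨G₁, hG₁m, hG₁c, hG₁P, hG₁inv⟩ :=
        LapErg.exists_invariant_conull 𝒢 (hG₀ae.and hhae)
      have hlocal : ∀ x ∈ G₁, ∀ v ∈ LapErg.nbhd 𝒢 x, g v = g x := by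
        intro x hx
        have hx0 : x ∈ G₀ := (hG₁P x hx).1
        have hhx : h x = 0 := (hG₁P x hx).2
        have heq : LapErg.T 𝒢 q x = (𝒢.deg x : ℝ≥0∞) * q x :=
          le_antisymm (tsub_eq_zero_iff_le.mp hhx) (hle x hx0)
        have hr : ∑ v ∈ LapErg.nbhd 𝒢 x, ‖g v‖ ^ 2
            = (((LapErg.nbhd 𝒢 x).card : ℝ)) * ‖g x‖ ^ 2 := by
          rw [hTq, hdq, ENNReal.coe_inj] at heq
          have hreal := congrArg (fun t : ℝ≥0 => (t : ℝ)) heq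
          push_cast at hreal
          rw [LapErg.card_nbhd]
          simpa [coe_nnnorm] using hreal
        exact LapErg.eq_step (LapErg.nbhd 𝒢 x) g (g x)
          (by rw [LapErg.card_nbhd]; exact hharm x hx0) hr
      have key : ∀ w : 𝒢.X → ℝ, Measurable w → (∀ x ∈ G₁, ∀ v ∈ LapErg.nbhd 𝒢 x, w v = w x) →
          ∃ a : ℝ, ∀ᵐ x ∂𝒢.ν, w x = a := by
        intro w hw hloc
        refine LapErg.levelset_const 𝒢.ν w hw fun t => ?_
        set A : Set 𝒢.X := (G₁ ∩ {x | t < w x}) ∪ G₁ᶜ with hAdef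
        have hwms : MeasurableSet {x | t < w x} := hw measurableSet_Ioi
        have hAm : MeasurableSet A := (hG₁m.inter hwms).union hG₁m.compl
        have hAinv : ∀ x y, x ∈ A → 𝒢.graph.Adj x y → y ∈ A := by
          rintro x y (⟨hxG, hxw⟩ | hxc) hxy
          · left
            refine ⟨hG₁inv x hxG y hxy, ?_⟩
            have hwy : w y = w x := hloc x hxG y ((LapErg.mem_nbhd 𝒢).mpr hxy)
            show t < w y
            rw [hwy]
            exact hxw
          · right
            intro hyG
            exact hxc (hG₁inv y hyG x hxy.symm)
        have hAν : 𝒢.ν A = 𝒢.ν {x | t < w x} := by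
          apply le_antisymm
          · calc 𝒢.ν A ≤ 𝒢.ν ({x | t < w x} ∪ G₁ᶜ) :=
                  measure_mono (Set.union_subset_union_left _ Set.inter_subset_right)
              _ ≤ 𝒢.ν {x | t < w x} + 𝒢.ν G₁ᶜ := measure_union_le _ _
              _ = 𝒢.ν {x | t < w x} := by rw [hG₁c, add_zero]
          · refine measure_mono fun x hx => ?_
            by_cases hxG : x ∈ G₁
            · exact Or.inl ⟨hxG, hx⟩
            · exact Or.inr hxG
        rcases eq_or_ne (𝒢.ν A) 0 with hA | hA
        · exact Or.inl (by rw [← hAν]; exact hA)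
        · refine Or.inr ?_
          rw [← hAν]
          by_contra hA1
          refine herg ⟨A, hAm, ?_, ?_, hAinv⟩
          · exact pos_iff_ne_zero.mpr hA
          · exact lt_of_le_of_ne prob_le_one hA1
      obtain ⟨a₁, ha₁⟩ := key (fun x => (g x).re) (Complex.measurable_re.comp hgmeas)
        (fun x hx v hv => congrArg Complex.re (hlocal x hx v hv))
      obtain ⟨a₂, ha₂⟩ := key (fun x => (g x).im) (Complex.measurable_im.comp hgmeas)
        (fun x hx v hv => congrArg Complex.im (hlocal x hx v hv))
      refine ⟨(a₁ : ℂ) + (a₂ : ℂ) * Complex.I, ?_⟩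
      filter_upwards [hfg, ha₁, ha₂] with x h1 h2 h3
      rw [h1, ← Complex.re_add_im (g x), h2, h3]
    · -- constants are in the kernel
      rintro ⟨a, ha⟩
      obtain ⟨G, hGm, hGc, hGP, hGinv⟩ := LapErg.exists_invariant_conull 𝒢 ha
      have hGae : ∀ᵐ x ∂𝒢.ν, x ∈ G := by
        rw [ae_iff]
        exact hGc
      filter_upwards [hGae] with x hx
      rw [lap_eq, hGP x hx]
      have hnbr : ∀ v ∈ LapErg.nbhd 𝒢 x, f v = a := fun v hv =>
        hGP v (hGinv x hx v ((LapErg.mem_nbhd 𝒢).mp hv))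
      rw [Finset.sum_congr rfl hnbr, Finset.sum_const, nsmul_eq_mul, LapErg.card_nbhd, sub_self]
end
end
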